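/- arXiv:2008.01422 — 11 statements merged into one kernel-verified Lean document; each statement's English description precedes it below -/
import Mathlib

section
/- There exist a type D, a partial order on D making it a dcpo with a least element, and with at least two distinct elements, together with an order isomorphism between D and the type of Scott-continuous functions from D to D ordered pointwise (f ≤ g iff f x ≤ g x for all x). In other words, a nontrivial pointed dcpo isomorphic to its own Scott-continuous self-exponential exists. -/
/-- A partial order is a dcpo if every nonempty directed subset has a least upper bound. -/
def IsDcpo (α : Type*) [Preorder α] : Prop :=
  ∀ d : Set α, d.Nonempty → DirectedOn (· ≤ ·) d → ∃ a, IsLUB d a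

/-- `D` is a nontrivial pointed dcpo order-isomorphic to its Scott-continuous
self-exponential (ordered pointwise). -/
def NontrivialPointedDcpoSelfExp (D : Type) [PartialOrder D] : Prop :=
  IsDcpo D ∧ (∃ bot : D, ∀ x : D, bot ≤ x) ∧ (∃ x y : D, x ≠ y) ∧
    (∀ f g : {f : D → D // ScottContinuous f}, f ≤ g ↔ ∀ x : D, f.1 x ≤ g.1 x) ∧
    Nonempty ({f : D → D // ScottContinuous f} ≃o D)

namespace DinfModel
noncomputable section
def DnAux : ℕ → (α : Type) × PartialOrder α :=
  fun n => Nat.rec ⟨Bool, inferInstance⟩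
    (fun _ p => letI := p.2; ⟨p.1 →o p.1, inferInstance⟩) n
abbrev Dn (n : ℕ) : Type := (DnAux n).1
instance instDnPO (n : ℕ) : PartialOrder (Dn n) := (DnAux n).2
def toHom {n : ℕ} : Dn (n+1) → (Dn n →o Dn n) := fun f => f
def ofHom {n : ℕ} : (Dn n →o Dn n) → Dn (n+1) := fun f => f
lemma toHom_le_toHom {n : ℕ} {f g : Dn (n+1)} (h : f ≤ g) : toHom f ≤ toHom g := h
lemma ofHom_le_ofHom {n : ℕ} {f g : Dn n →o Dn n} (h : f ≤ g) : ofHom f ≤ ofHom g := h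
instance instDnFin : ∀ n, Finite (Dn n)
  | 0 => inferInstanceAs (Finite Bool)
  | n + 1 => by
    haveI := instDnFin n
    exact Finite.of_injective (β := Dn n → Dn n)
      (fun f : Dn (n+1) => (toHom f : Dn n → Dn n))
      (fun f g hfg => by
        have : toHom f = toHom g := OrderHom.ext (toHom f) (toHom g) hfg
        exact this)
end
end DinfModel
namespace DinfModel
noncomputable section

lemma le_of_toHom {n : ℕ} {f g : Dn (n+1)} (h : ∀ x, toHom f x ≤ toHom g x) : f ≤ g :=
  ofHom_le_ofHom (n := n) (fun x => h x)

/-- embedding / projection pairs between consecutive levels -/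
def ep : ∀ n : ℕ, (Dn n →o Dn (n+1)) × (Dn (n+1) →o Dn n) :=
  fun n => Nat.rec
    (⟨⟨fun b => ofHom (OrderHom.const _ b),
        fun a b h => ofHom_le_ofHom (fun _ => h)⟩,
      ⟨fun f => toHom f false, fun f g h => toHom_le_toHom h false⟩⟩)
    (fun n ih =>
      ⟨⟨fun f => ofHom ((ih.1).comp ((toHom f).comp ih.2)),
        fun f g h => ofHom_le_ofHom (fun x => (ih.1).mono (toHom_le_toHom h _))⟩,
       ⟨fun g => ofHom ((ih.2).comp ((toHom g).comp ih.1)),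
        fun f g h => ofHom_le_ofHom (fun x => (ih.2).mono (toHom_le_toHom h _))⟩⟩) n

def e (n : ℕ) : Dn n →o Dn (n+1) := (ep n).1
def p (n : ℕ) : Dn (n+1) →o Dn n := (ep n).2

lemma e_succ_apply {n : ℕ} (f : Dn (n+1)) (x : Dn (n+1)) :
    toHom (e (n+1) f) x = e n (toHom f (p n x)) := rfl
lemma p_succ_apply {n : ℕ} (g : Dn (n+2)) (x : Dn n) :
    toHom (p (n+1) g) x = p n (toHom g (e n x)) := rfl

lemma p_e : ∀ (n : ℕ) (x : Dn n), p n (e n x) = x := by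
  intro n
  induction n with
  | zero => intro x; rfl
  | succ n ih =>
    intro f
    apply le_antisymm
    · apply le_of_toHom; intro x
      calc toHom (p (n+1) (e (n+1) f)) x = p n (e n (toHom f (p n (e n x)))) := rfl
        _ = toHom f x := by rw [ih, ih]
        _ ≤ toHom f x := le_rfl
    · apply le_of_toHom; intro x
      show toHom f x ≤ p n (e n (toHom f (p n (e n x))))
      rw [ih, ih]

lemma e_p_le : ∀ (n : ℕ) (f : Dn (n+1)), e n (p n f) ≤ f := by
  intro n
  induction n with
  | zero =>
    intro f
    apply le_of_toHom; intro x
    show toHom f false ≤ toHom f x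
    exact (toHom f).mono (Bool.false_le x)
  | succ n ih =>
    intro f
    apply le_of_toHom; intro x
    show e n (p n (toHom f (e n (p n x)))) ≤ toHom f x
    calc e n (p n (toHom f (e n (p n x)))) ≤ toHom f (e n (p n x)) := ih _
      _ ≤ toHom f x := (toHom f).mono (ih x)

end
end DinfModel
namespace DinfModel
noncomputable section

/-- iterated embeddings: raise by `k` -/
def eT (n : ℕ) : ∀ k : ℕ, Dn n →o Dn (n + k)
  | 0 => OrderHom.id
  | k + 1 => (e (n + k)).comp (eT n k)

/-- iterated projections: lower by `k` -/
def pT (n : ℕ) : ∀ k : ℕ, Dn (n + k) →o Dn n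
  | 0 => OrderHom.id
  | k + 1 => (pT n k).comp (p (n + k))

/-- cast along an equality of levels -/
def cD {a b : ℕ} (h : a = b) : Dn a →o Dn b := h ▸ OrderHom.id

@[simp] lemma cD_refl {a : ℕ} (h : a = a) (x : Dn a) : cD h x = x := rfl

lemma cD_le_cD {a b : ℕ} (h : a = b) {x y : Dn a} (hxy : x ≤ y) :
    cD h x ≤ cD h y := by subst h; exact hxy

lemma p_cD {a b : ℕ} (h : a = b) (h' : a + 1 = b + 1) (x : Dn (a+1)) :
    p b (cD h' x) = cD h (p a x) := by subst h; rw [cD_refl, cD_refl]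

lemma p_cD_e {a b : ℕ} (h : a = b) (h' : a + 1 = b + 1) (w : Dn a) :
    p b (cD h' (e a w)) = cD h w := by subst h; rw [cD_refl, cD_refl, p_e]

lemma e_cD {a b : ℕ} (h : a = b) (h' : a + 1 = b + 1) (w : Dn a) :
    cD h' (e a w) = e b (cD h w) := by subst h; rw [cD_refl, cD_refl]

lemma pT_eT (n : ℕ) : ∀ (k : ℕ) (z : Dn n), pT n k (eT n k z) = z := by
  intro k
  induction k with
  | zero => intro z; rfl
  | succ k ih =>
    intro z
    show pT n k (p (n + k) (e (n + k) (eT n k z))) = z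
    rw [p_e, ih]

lemma p_pT (m : ℕ) : ∀ (k : ℕ) (h : (m+1) + k = m + (k+1)) (x : Dn ((m+1) + k)),
    p m (pT (m+1) k x) = pT m (k+1) (cD h x) := by
  intro k
  induction k with
  | zero =>
    intro h x
    show p m x = pT m 0 (p (m + 0) (cD h x))
    rw [cD_refl]
    rfl
  | succ k ih =>
    intro h x
    show p m (pT (m+1) k (p (m+1+k) x)) = pT m (k+1) (p (m + (k+1)) (cD h x))
    rw [ih (by omega)]
    exact congrArg (pT m (k+1)) ((p_cD (by omega : m + 1 + k = m + (k+1)) h x).symm)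
end
end DinfModel
namespace DinfModel
noncomputable section

lemma cD_cD {a b c : ℕ} (h : a = b) (h' : b = c) (h'' : a = c) (x : Dn a) :
    cD h' (cD h x) = cD h'' x := by subst h; subst h'; rfl

lemma eT_congr (n : ℕ) {i j : ℕ} (h : i = j) (h' : n + i = n + j) (z : Dn n) :
    cD h' (eT n i z) = eT n j z := by subst h; rw [cD_refl]

lemma eT_split (n i : ℕ) : ∀ (j : ℕ) (h : (n+i)+j = n+(i+j)) (z : Dn n),
    eT n (i+j) z = cD h (eT (n+i) j (eT n i z)) := by
  intro j
  induction j with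
  | zero => intro h z; exact (cD_refl h _).symm
  | succ j ih =>
    intro h z
    show e (n + (i+j)) (eT n (i+j) z) = cD h (e ((n+i)+j) (eT (n+i) j (eT n i z)))
    exact (congrArg _ (ih (by omega) z)).trans
      (e_cD (by omega : (n+i)+j = n + (i+j)) h _).symm

/-- coordinates of the embedding of `Dn n` into the inverse limit -/
def epsF (n : ℕ) (z : Dn n) (m : ℕ) : Dn m :=
  pT m n (cD (Nat.add_comm n m) (eT n m z))

lemma epsF_mono (n : ℕ) {z z' : Dn n} (h : z ≤ z') (m : ℕ) :
    epsF n z m ≤ epsF n z' m :=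
  (pT m n).mono (cD_le_cD _ ((eT n m).mono h))

lemma epsF_above (n k : ℕ) (z : Dn n) : epsF n z (n + k) = eT n k z := by
  show pT (n+k) n (cD _ (eT n (n+k) z)) = eT n k z
  rw [← eT_congr n (Nat.add_comm k n) (by omega) z]
  rw [cD_cD _ _ (by omega : n + (k + n) = (n+k) + n)]
  rw [eT_split n k n (by omega)]
  rw [cD_cD _ _ (by omega : (n+k)+n = (n+k)+n)]
  rw [cD_refl, pT_eT]

lemma epsF_self (n : ℕ) (z : Dn n) : epsF n z n = z := epsF_above n 0 z

lemma epsF_succ_of_le {n m : ℕ} (h : n ≤ m) (z : Dn n) :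
    epsF n z (m+1) = e m (epsF n z m) := by
  obtain ⟨k, rfl⟩ := Nat.exists_eq_add_of_le h
  rw [epsF_above n k z]
  exact epsF_above n (k+1) z

lemma epsF_coh (n m : ℕ) (z : Dn n) : p m (epsF n z (m+1)) = epsF n z m := by
  show p m (pT (m+1) n (cD _ (eT n (m+1) z))) = epsF n z m
  rw [p_pT m n (by omega)]
  show pT m n (p (m + n) (cD (by omega) (cD (Nat.add_comm n (m+1)) (e (n+m) (eT n m z))))) =
    epsF n z m
  have h1 : cD (by omega : (m+1)+n = m+(n+1)) (cD (Nat.add_comm n (m+1)) (e (n+m) (eT n m z)))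
      = cD (by omega : n+(m+1) = m+(n+1)) (e (n+m) (eT n m z)) :=
    cD_cD _ _ _ _
  have h2 : p (m+n) (cD (by omega : n+(m+1) = m+(n+1)) (e (n+m) (eT n m z)))
      = cD (Nat.add_comm n m) (eT n m z) :=
    p_cD_e _ _ _
  exact congrArg (pT m n) ((congrArg (p (m+n)) h1).trans h2)

end
end DinfModel
namespace DinfModel
noncomputable section

/-- The inverse limit D∞. -/
def Dinf : Type := {x : ∀ n, Dn n // ∀ n, p n (x (n+1)) = x n}

instance : PartialOrder Dinf := Subtype.partialOrder _

lemma Dinf.le_def {x y : Dinf} : x ≤ y ↔ ∀ n, x.1 n ≤ y.1 n := Iff.rfl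

/-- two coherent families agreeing at `k` agree below `k` -/
lemma coh_agree_below {F G : ∀ n, Dn n}
    (hF : ∀ m, p m (F (m+1)) = F m) (hG : ∀ m, p m (G (m+1)) = G m)
    {k : ℕ} (h : F k = G k) : ∀ j m, m + j = k → F m = G m := by
  intro j
  induction j with
  | zero => intro m hm; rwa [show m = k by omega]
  | succ j ih =>
    intro m hm
    have := ih (m+1) (by omega)
    rw [← hF m, ← hG m, this]

/-- the embedding of level n into D∞ -/
def eps (n : ℕ) (z : Dn n) : Dinf := ⟨epsF n z, fun m => epsF_coh n m z⟩

lemma eps_mono (n : ℕ) {z z' : Dn n} (h : z ≤ z') : eps n z ≤ eps n z' :=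
  fun m => epsF_mono n h m

lemma eps_e (n : ℕ) (z : Dn n) : eps (n+1) (e n z) = eps n z := by
  have key : ∀ m, epsF (n+1) (e n z) m = epsF n z m := by
    have hup : ∀ k, epsF (n+1) (e n z) (n+1+k) = epsF n z (n+1+k) := by
      intro k
      induction k with
      | zero =>
        show epsF (n+1) (e n z) (n+1) = epsF n z (n+1)
        rw [epsF_self, epsF_succ_of_le (le_refl n), epsF_self]
      | succ k ih =>
        have h1 : epsF (n+1) (e n z) (n+1+k+1) = e (n+1+k) (epsF (n+1) (e n z) (n+1+k)) :=
          epsF_succ_of_le (by omega) _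
        have h2 : epsF n z (n+1+k+1) = e (n+1+k) (epsF n z (n+1+k)) :=
          epsF_succ_of_le (by omega) _
        show epsF (n+1) (e n z) (n+1+k+1) = epsF n z (n+1+k+1)
        rw [h1, h2, ih]
    intro m
    rcases le_or_gt m (n+1) with hm | hm
    · exact coh_agree_below (fun m => epsF_coh (n+1) m (e n z)) (fun m => epsF_coh n m z)
        (hup 0) (n+1-m) m (by omega)
    · have := hup (m - (n+1))
      rwa [show n+1+(m-(n+1)) = m by omega] at this
  exact Subtype.ext (funext key)

/-- below level n, the embedding of `x.1 n` recovers the coordinates of `x` -/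
lemma epsF_coord_eq {x : Dinf} {n m : ℕ} (h : m ≤ n) : epsF n (x.1 n) m = x.1 m :=
  coh_agree_below (fun m => epsF_coh n m (x.1 n)) x.2 (epsF_self n (x.1 n)) (n-m) m (by omega)

lemma eps_proj_le (n : ℕ) (x : Dinf) : eps n (x.1 n) ≤ x := by
  intro m
  rcases le_or_gt m n with hm | hm
  · show epsF n (x.1 n) m ≤ x.1 m
    rw [epsF_coord_eq hm]
  · -- m > n : upward induction
    have : ∀ k, epsF n (x.1 n) (n + k) ≤ x.1 (n + k) := by
      intro k
      induction k with
      | zero => show epsF n (x.1 n) n ≤ x.1 n; rw [epsF_self]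
      | succ k ih =>
        show epsF n (x.1 n) (n+k+1) ≤ x.1 (n+k+1)
        rw [epsF_succ_of_le (by omega : n ≤ n + k)]
        calc e (n+k) (epsF n (x.1 n) (n+k)) ≤ e (n+k) (x.1 (n+k)) := (e (n+k)).mono ih
          _ = e (n+k) (p (n+k) (x.1 (n+k+1))) := by rw [x.2]
          _ ≤ x.1 (n+k+1) := e_p_le _ _
    have h2 := this (m - n)
    rwa [show n+(m-n) = m by omega] at h2

lemma eps_self_coord (n : ℕ) (z : Dn n) : (eps n z).1 n = z := epsF_self n z

lemma eps_proj_mono (n : ℕ) (x : Dinf) : eps n (x.1 n) ≤ eps (n+1) (x.1 (n+1)) := by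
  rw [← eps_e n (x.1 n)]
  apply eps_mono
  rw [← x.2 n]
  exact e_p_le n (x.1 (n+1))

lemma eps_proj_mono_le {n m : ℕ} (h : n ≤ m) (x : Dinf) :
    eps n (x.1 n) ≤ eps m (x.1 m) := by
  induction m with
  | zero => rw [Nat.le_zero.mp h]
  | succ m ih =>
    rcases Nat.lt_or_ge n (m+1) with hm | hm
    · exact le_trans (ih (by omega)) (eps_proj_mono m x)
    · rw [show n = m+1 by omega]

end
end DinfModel
namespace DinfModel
noncomputable section

lemma eps_shift {k m : ℕ} (hm : m ≤ k) (W : Dn (k+1)) :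
    epsF (k+1) W m = epsF k (p k W) m := by
  have hk : epsF (k+1) W k = epsF k (p k W) k := by
    rw [epsF_self, ← epsF_coh (k+1) k W, epsF_self]
  exact coh_agree_below (fun j => epsF_coh (k+1) j W) (fun j => epsF_coh k j (p k W))
    hk (k-m) m (by omega)

lemma eps_apply (n : ℕ) (z : Dn n) (x : Dinf) :
    ∀ j, epsF (n+j) (toHom (x.1 (n+j+1)) (epsF n z (n+j))) n = toHom (x.1 (n+1)) z := by
  intro j
  induction j with
  | zero =>
    show epsF n (toHom (x.1 (n+1)) (epsF n z n)) n = toHom (x.1 (n+1)) z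
    rw [epsF_self, epsF_self]
  | succ j ih =>
    have hstep : epsF n z (n+j+1) = e (n+j) (epsF n z (n+j)) :=
      epsF_succ_of_le (by omega) z
    show epsF (n+j+1) (toHom (x.1 (n+j+1+1)) (epsF n z (n+j+1))) n = toHom (x.1 (n+1)) z
    rw [hstep]
    rw [eps_shift (by omega : n ≤ n + j)]
    have hp : p (n+j) (toHom (x.1 (n+j+2)) (e (n+j) (epsF n z (n+j))))
        = toHom (p (n+j+1) (x.1 (n+j+2))) (epsF n z (n+j)) :=
      (p_succ_apply (x.1 (n+j+2)) _).symm
    rw [hp, x.2 (n+j+1)]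
    exact ih

/-- in a finite poset, a nonempty directed set has a greatest element -/
lemma directed_has_greatest {α : Type} [PartialOrder α] [Finite α] {s : Set α}
    (hne : s.Nonempty) (hdir : DirectedOn (· ≤ ·) s) : ∃ m ∈ s, ∀ y ∈ s, y ≤ m := by
  obtain ⟨m, hm, hmax⟩ := Set.Finite.exists_maximalFor id s s.toFinite hne
  simp only [id_eq] at hmax
  refine ⟨m, hm, fun y hy => ?_⟩
  obtain ⟨z, hz, hyz, hmz⟩ := hdir y hy m hm
  exact le_trans hyz (hmax hz hmz)

lemma exists_isLUB_attained {d : Set Dinf} (hne : d.Nonempty)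
    (hdir : DirectedOn (· ≤ ·) d) :
    ∃ a : Dinf, IsLUB d a ∧ ∀ n, ∃ y ∈ d, y.1 n = a.1 n := by
  have H : ∀ n : ℕ, ∃ m ∈ (fun y : Dinf => y.1 n) '' d,
      ∀ w ∈ (fun y : Dinf => y.1 n) '' d, w ≤ m := by
    intro n
    apply directed_has_greatest (hne.image _)
    rintro _ ⟨y, hy, rfl⟩ _ ⟨z, hz, rfl⟩
    obtain ⟨w, hw, hyw, hzw⟩ := hdir y hy z hz
    exact ⟨w.1 n, ⟨w, hw, rfl⟩, hyw n, hzw n⟩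
  choose g hg₁ hg₂ using H
  have coh : ∀ n, p n (g (n+1)) = g n := by
    intro n
    apply le_antisymm
    · obtain ⟨y, hy, hyn⟩ := hg₁ (n+1)
      rw [← hyn, y.2 n]
      exact hg₂ n _ ⟨y, hy, rfl⟩
    · obtain ⟨z, hz, hzn⟩ := hg₁ n
      have hzn' : z.1 n = g n := hzn
      rw [← hzn', ← z.2 n]
      exact (p n).mono (hg₂ (n+1) _ ⟨z, hz, rfl⟩)
  refine ⟨⟨g, coh⟩, ⟨fun y hy n => hg₂ n _ ⟨y, hy, rfl⟩, fun u hu n => ?_⟩, fun n => ?_⟩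
  · obtain ⟨y, hy, hyn⟩ := hg₁ n
    have hyn' : y.1 n = g n := hyn
    show g n ≤ u.1 n
    rw [← hyn']
    exact hu hy n
  · obtain ⟨y, hy, hyn⟩ := hg₁ n
    exact ⟨y, hy, hyn⟩

lemma dinf_dcpo : ∀ d : Set Dinf, d.Nonempty → DirectedOn (· ≤ ·) d → ∃ a, IsLUB d a :=
  fun _ hne hdir => (exists_isLUB_attained hne hdir).imp (fun _ h => h.1)

lemma isLUB_attained {d : Set Dinf} (hne : d.Nonempty) (hdir : DirectedOn (· ≤ ·) d)
    {a : Dinf} (ha : IsLUB d a) : ∀ n, ∃ y ∈ d, y.1 n = a.1 n := by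
  obtain ⟨b, hb, hatt⟩ := exists_isLUB_attained hne hdir
  rwa [IsLUB.unique hb ha] at hatt

end
end DinfModel
namespace DinfModel
noncomputable section

def chainLUB {c : ℕ → Dinf} (hc : Monotone c) : Dinf :=
  Classical.choose (dinf_dcpo (Set.range c) (Set.range_nonempty c)
    (hc.directed_le.directedOn_range))

lemma chainLUB_isLUB {c : ℕ → Dinf} (hc : Monotone c) :
    IsLUB (Set.range c) (chainLUB hc) :=
  Classical.choose_spec (dinf_dcpo (Set.range c) (Set.range_nonempty c)
    (hc.directed_le.directedOn_range))

lemma le_chainLUB {c : ℕ → Dinf} (hc : Monotone c) (k : ℕ) : c k ≤ chainLUB hc :=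
  (chainLUB_isLUB hc).1 ⟨k, rfl⟩

lemma chainLUB_le {c : ℕ → Dinf} (hc : Monotone c) {u : Dinf} (hu : ∀ k, c k ≤ u) :
    chainLUB hc ≤ u :=
  (chainLUB_isLUB hc).2 (fun _ ⟨k, hk⟩ => hk ▸ hu k)

lemma chainLUB_mono {c c' : ℕ → Dinf} (hc : Monotone c) (hc' : Monotone c')
    (h : ∀ k, c k ≤ c' k) : chainLUB hc ≤ chainLUB hc' :=
  chainLUB_le hc (fun k => le_trans (h k) (le_chainLUB hc' k))

lemma chainLUB_attained {c : ℕ → Dinf} (hc : Monotone c) (n : ℕ) :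
    ∃ k, (c k).1 n = (chainLUB hc).1 n := by
  obtain ⟨y, ⟨k, rfl⟩, h⟩ := isLUB_attained (Set.range_nonempty c)
    (hc.directed_le.directedOn_range) (chainLUB_isLUB hc) n
  exact ⟨k, h⟩

/-- the chain defining `Φ x y` -/
def cPhi (x y : Dinf) (k : ℕ) : Dinf := eps k (toHom (x.1 (k+1)) (y.1 k))

lemma cPhi_step (x y : Dinf) (k : ℕ) : cPhi x y k ≤ cPhi x y (k+1) := by
  have h1 : e k (toHom (x.1 (k+1)) (y.1 k)) = toHom (e (k+1) (x.1 (k+1))) (y.1 (k+1)) := by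
    rw [e_succ_apply, y.2 k]
  have h2 : toHom (e (k+1) (x.1 (k+1))) (y.1 (k+1)) ≤ toHom (x.1 (k+2)) (y.1 (k+1)) := by
    have hle : e (k+1) (x.1 (k+1)) ≤ x.1 (k+2) := by
      rw [← x.2 (k+1)]
      exact e_p_le _ _
    exact toHom_le_toHom hle _
  calc cPhi x y k = eps (k+1) (e k (toHom (x.1 (k+1)) (y.1 k))) := (eps_e _ _).symm
    _ ≤ eps (k+1) (toHom (x.1 (k+2)) (y.1 (k+1))) := by rw [h1]; exact eps_mono _ h2
    _ = cPhi x y (k+1) := rfl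

lemma cPhi_mono (x y : Dinf) : Monotone (cPhi x y) :=
  monotone_nat_of_le_succ (cPhi_step x y)

lemma cPhi_mono_y (x : Dinf) {y y' : Dinf} (h : y ≤ y') (k : ℕ) :
    cPhi x y k ≤ cPhi x y' k :=
  eps_mono _ ((toHom (x.1 (k+1))).mono (h k))

lemma cPhi_mono_x {x x' : Dinf} (h : x ≤ x') (y : Dinf) (k : ℕ) :
    cPhi x y k ≤ cPhi x' y k :=
  eps_mono _ (toHom_le_toHom (h (k+1)) (y.1 k))

def PhiFun (x : Dinf) (y : Dinf) : Dinf := chainLUB (cPhi_mono x y)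

lemma PhiFun_mono_y (x : Dinf) : Monotone (PhiFun x) :=
  fun _ _ h => chainLUB_mono _ _ (cPhi_mono_y x h)

lemma PhiFun_mono_x {x x' : Dinf} (h : x ≤ x') (y : Dinf) : PhiFun x y ≤ PhiFun x' y :=
  chainLUB_mono _ _ (fun k => cPhi_mono_x h y k)

lemma PhiFun_scott (x : Dinf) : ScottContinuous (PhiFun x) := by
  intro d hne hdir a ha
  constructor
  · rintro _ ⟨y, hy, rfl⟩
    exact (PhiFun_mono_y x) (ha.1 hy)
  · intro u hu
    apply chainLUB_le
    intro k
    obtain ⟨y, hy, hyk⟩ := isLUB_attained hne hdir ha k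
    have : cPhi x a k = cPhi x y k := by unfold cPhi; rw [hyk]
    rw [this]
    calc cPhi x y k ≤ PhiFun x y := le_chainLUB _ k
      _ ≤ u := hu ⟨y, hy, rfl⟩

lemma hom_ext {n : ℕ} {f g : Dn (n+1)} (h : ∀ z, toHom f z = toHom g z) : f = g := by
  have : toHom f = toHom g := OrderHom.ext (toHom f) (toHom g) (funext h)
  exact this

/-- the (n+1)-st coordinate of Ψ f -/
def psiHom (f : Dinf → Dinf) (hf : Monotone f) (n : ℕ) : Dn (n+1) :=
  ofHom ⟨fun z => (f (eps n z)).1 n, fun z z' h => (hf (eps_mono n h)) n⟩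

lemma psiHom_apply (f : Dinf → Dinf) (hf : Monotone f) (n : ℕ) (z : Dn n) :
    toHom (psiHom f hf n) z = (f (eps n z)).1 n := rfl

lemma psiHom_coh (f : Dinf → Dinf) (hf : Monotone f) (n : ℕ) :
    p (n+1) (psiHom f hf (n+1)) = psiHom f hf n := by
  apply hom_ext
  intro z
  calc toHom (p (n+1) (psiHom f hf (n+1))) z
      = p n (toHom (psiHom f hf (n+1)) (e n z)) := p_succ_apply _ _
    _ = p n ((f (eps (n+1) (e n z))).1 (n+1)) := rfl
    _ = p n ((f (eps n z)).1 (n+1)) := by rw [eps_e]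
    _ = (f (eps n z)).1 n := (f (eps n z)).2 n
    _ = toHom (psiHom f hf n) z := rfl

def Psi (f : Dinf → Dinf) (hf : Monotone f) : Dinf :=
  ⟨fun n => Nat.rec (p 0 (psiHom f hf 0)) (fun n _ => psiHom f hf n) n,
   fun n => by cases n with
     | zero => rfl
     | succ n => exact psiHom_coh f hf n⟩

lemma Psi_coord_succ (f : Dinf → Dinf) (hf : Monotone f) (n : ℕ) :
    (Psi f hf).1 (n+1) = psiHom f hf n := rfl

lemma Psi_mono {f g : Dinf → Dinf} (hf : Monotone f) (hg : Monotone g)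
    (h : ∀ y, f y ≤ g y) : Psi f hf ≤ Psi g hg := by
  have hsucc : ∀ n, psiHom f hf n ≤ psiHom g hg n :=
    fun n => ofHom_le_ofHom (fun z => (h (eps n z)) n)
  intro n
  cases n with
  | zero => exact (p 0).mono (hsucc 0)
  | succ n => exact hsucc n

end
end DinfModel
namespace DinfModel
noncomputable section

/-- the approximating chain of `y` -/
def epsChain (y : Dinf) (n : ℕ) : Dinf := eps n (y.1 n)

lemma epsChain_mono (y : Dinf) : Monotone (epsChain y) :=
  fun _ _ h => eps_proj_mono_le h y

lemma isLUB_epsChain (y : Dinf) : IsLUB (Set.range (epsChain y)) y := by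
  constructor
  · rintro _ ⟨n, rfl⟩
    exact eps_proj_le n y
  · intro u hu m
    have h1 : (epsChain y m).1 m = y.1 m := eps_self_coord m (y.1 m)
    have h2 : epsChain y m ≤ u := hu ⟨m, rfl⟩
    calc y.1 m = (epsChain y m).1 m := h1.symm
      _ ≤ u.1 m := h2 m

lemma Psi_Phi (x : Dinf) : Psi (PhiFun x) (PhiFun_mono_y x) = x := by
  have key : ∀ n, psiHom (PhiFun x) (PhiFun_mono_y x) n = x.1 (n+1) := by
    intro n
    apply hom_ext
    intro z
    show (PhiFun x (eps n z)).1 n = toHom (x.1 (n+1)) z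
    have hval : (cPhi x (eps n z) n).1 n = toHom (x.1 (n+1)) z := by
      show (eps n (toHom (x.1 (n+1)) ((eps n z).1 n))).1 n = toHom (x.1 (n+1)) z
      rw [show (eps n z).1 n = z from eps_self_coord n z]
      exact eps_self_coord n _
    have hub : ∀ k, (cPhi x (eps n z) k).1 n ≤ toHom (x.1 (n+1)) z := by
      intro k
      rcases le_or_gt k n with hk | hk
      · calc (cPhi x (eps n z) k).1 n ≤ (cPhi x (eps n z) n).1 n :=
              (cPhi_mono x (eps n z) hk) n
          _ = toHom (x.1 (n+1)) z := hval
      · have hk' : n ≤ k := le_of_lt hk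
        obtain ⟨j, rfl⟩ := Nat.exists_eq_add_of_le hk'
        have : (cPhi x (eps n z) (n+j)).1 n
            = epsF (n+j) (toHom (x.1 (n+j+1)) (epsF n z (n+j))) n := rfl
        rw [this, eps_apply n z x j]
    apply le_antisymm
    · obtain ⟨k, hk⟩ := chainLUB_attained (cPhi_mono x (eps n z)) n
      rw [show (PhiFun x (eps n z)).1 n = (cPhi x (eps n z) k).1 n from hk.symm]
      exact hub k
    · rw [← hval]
      exact (le_chainLUB (cPhi_mono x (eps n z)) n) n
  apply Subtype.ext
  funext n
  cases n with
  | zero =>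
    show p 0 (psiHom (PhiFun x) (PhiFun_mono_y x) 0) = x.1 0
    rw [key 0, x.2 0]
  | succ n => exact key n

lemma Phi_Psi {f : Dinf → Dinf} (hf : ScottContinuous f) (y : Dinf) :
    PhiFun (Psi f hf.monotone) y = f y := by
  set hm := hf.monotone
  have hc : ∀ k, cPhi (Psi f hm) y k = eps k ((f (epsChain y k)).1 k) := fun k => rfl
  apply le_antisymm
  · apply chainLUB_le
    intro k
    rw [hc k]
    calc eps k ((f (epsChain y k)).1 k) ≤ f (epsChain y k) := eps_proj_le k _
      _ ≤ f y := hm (eps_proj_le k y)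
  · have hlub := hf (Set.range_nonempty (epsChain y))
      ((epsChain_mono y).directed_le.directedOn_range) (isLUB_epsChain y)
    apply hlub.2
    rintro _ ⟨_, ⟨k, rfl⟩, rfl⟩
    -- goal : f (epsChain y k) ≤ PhiFun (Psi f hm) y
    apply (isLUB_epsChain (f (epsChain y k))).2
    rintro _ ⟨j, rfl⟩
    -- goal : eps j ((f (epsChain y k)).1 j) ≤ PhiFun (Psi f hm) y
    set m := max j k
    calc epsChain (f (epsChain y k)) j
        ≤ epsChain (f (epsChain y k)) m := epsChain_mono _ (le_max_left j k)
      _ ≤ epsChain (f (epsChain y m)) m :=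
          eps_mono m ((hm (epsChain_mono y (le_max_right j k))) m)
      _ = cPhi (Psi f hm) y m := (hc m).symm
      _ ≤ PhiFun (Psi f hm) y := le_chainLUB _ m

end
end DinfModel
namespace DinfModel
noncomputable section

def botD : ∀ n, Dn n := fun n =>
  Nat.rec (show Dn 0 from false) (fun n b => ofHom (OrderHom.const (Dn n) b)) n

lemma botD_le : ∀ n (x : Dn n), botD n ≤ x := by
  intro n
  induction n with
  | zero => intro x; exact Bool.false_le x
  | succ n ih =>
    intro f
    apply le_of_toHom
    intro z
    exact ih (toHom f z)

lemma botD_coh : ∀ n, p n (botD (n+1)) = botD n := by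
  intro n
  induction n with
  | zero => rfl
  | succ n ih =>
    apply hom_ext
    intro z
    calc toHom (p (n+1) (botD (n+2))) z = p n (toHom (botD (n+2)) (e n z)) := p_succ_apply _ _
      _ = p n (botD (n+1)) := rfl
      _ = botD n := ih
      _ = toHom (botD (n+1)) z := rfl

def botInf : Dinf := ⟨botD, botD_coh⟩

lemma botInf_le (x : Dinf) : botInf ≤ x := fun n => botD_le n (x.1 n)

lemma botInf_ne : botInf ≠ eps 0 true := by
  intro h
  have h0 : botInf.1 0 = (eps 0 true).1 0 := congrArg (fun v : Dinf => v.1 0) h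
  rw [eps_self_coord 0 true] at h0
  exact Bool.false_ne_true h0

/-- D∞ is order isomorphic to its Scott-continuous self-exponential -/
def theIso : {f : Dinf → Dinf // ScottContinuous f} ≃o Dinf where
  toFun g := Psi g.1 g.2.monotone
  invFun x := ⟨PhiFun x, PhiFun_scott x⟩
  left_inv g := Subtype.ext (funext (fun y => Phi_Psi g.2 y))
  right_inv x := Psi_Phi x
  map_rel_iff' := by
    intro g h
    constructor
    · intro hP y
      rw [← Phi_Psi g.2 y, ← Phi_Psi h.2 y]
      exact PhiFun_mono_x hP y
    · intro hgh
      exact Psi_mono g.2.monotone h.2.monotone (fun y => hgh y)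

end
end DinfModel


/-- There exists a nontrivial pointed dcpo isomorphic to its own
Scott-continuous self-exponential. -/
theorem exists_nontrivial_pointed_dcpo_iso_self_exponential :
    ∃ (D : Type) (inst : PartialOrder D), @NontrivialPointedDcpoSelfExp D inst := by
  refine ⟨DinfModel.Dinf, inferInstance, DinfModel.dinf_dcpo,
    ⟨DinfModel.botInf, DinfModel.botInf_le⟩,
    ⟨DinfModel.botInf, DinfModel.eps 0 true, DinfModel.botInf_ne⟩,
    fun f g => Iff.rfl, ⟨DinfModel.theIso⟩⟩
end

section
/- The projections π∞ i : D∞ → D i, σ ↦ σ i, are Scott continuous and satisfy π i j ∘ π∞ j = π∞ i whenever i ≤ j; moreover D∞ with these projections is the limit of the diagram of projections: for every partial order E that is a dcpo and every family of Scott-continuous functions f i : E → D i satisfying π i j ∘ f j = f i whenever i ≤ j, the map f∞ : E → D∞ sending y to the family i ↦ f i y is well defined (its values satisfy the compatibility condition), is Scott continuous, satisfies π∞ i ∘ f∞ = f i for every i, and is the unique Scott-continuous function with this last property. -/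
/-- The limit `D∞` of a system of projections: dependent functions `σ : Π i, D i`
with `π i j h (σ j) = σ i` whenever `i ≤ j`, ordered pointwise (as a subtype of `Π i, D i`). -/
abbrev Dinf {I : Type*} [Preorder I] (D : I → Type*) [∀ i, PartialOrder (D i)]
    (π : ∀ i j : I, i ≤ j → D j → D i) : Type _ :=
  {σ : ∀ i, D i // ∀ (i j : I) (h : i ≤ j), π i j h (σ j) = σ i}

/-- The projections `π∞ i : D∞ → D i` are Scott continuous, compatible with the
projections of the diagram, and exhibit `D∞` as the limit of the diagram: every dcpo `E`
with a compatible family of Scott-continuous maps `f i : E → D i` admits a unique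
Scott-continuous `f∞ : E → D∞` with `π∞ i ∘ f∞ = f i`; moreover `f∞ y = (fun i => f i y)`
is well defined (its values satisfy the compatibility condition). -/
theorem Dinf_is_limit {I : Type*} [Preorder I] {D : I → Type*} [∀ i, PartialOrder (D i)]
    (hD : ∀ i, IsDcpo (D i))
    (ε : ∀ i j : I, i ≤ j → D i → D j) (π : ∀ i j : I, i ≤ j → D j → D i)
    (hεc : ∀ (i j : I) (h : i ≤ j), ScottContinuous (ε i j h))
    (hπc : ∀ (i j : I) (h : i ≤ j), ScottContinuous (π i j h))
    (hsec : ∀ (i j : I) (h : i ≤ j) (x : D i), π i j h (ε i j h x) = x)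
    (hdefl : ∀ (i j : I) (h : i ≤ j) (y : D j), ε i j h (π i j h y) ≤ y)
    (hεid : ∀ (i : I) (h : i ≤ i), ε i i h = id)
    (hπid : ∀ (i : I) (h : i ≤ i), π i i h = id)
    (hεcomp : ∀ (i j k : I) (hij : i ≤ j) (hjk : j ≤ k),
      ε i k (hij.trans hjk) = ε j k hjk ∘ ε i j hij)
    (hπcomp : ∀ (i j k : I) (hij : i ≤ j) (hjk : j ≤ k),
      π i k (hij.trans hjk) = π i j hij ∘ π j k hjk) :
    (∀ i : I, ScottContinuous (fun σ : Dinf D π => σ.1 i)) ∧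
    (∀ (i j : I) (h : i ≤ j),
      (π i j h ∘ fun σ : Dinf D π => σ.1 j) = fun σ : Dinf D π => σ.1 i) ∧
    (∀ (E : Type*) [PartialOrder E], IsDcpo E →
      ∀ f : ∀ i : I, E → D i, (∀ i, ScottContinuous (f i)) →
        (∀ (i j : I) (h : i ≤ j), π i j h ∘ f j = f i) →
        (∀ (y : E) (i j : I) (h : i ≤ j), π i j h (f j y) = f i y) ∧
        (∃! g : E → Dinf D π, ScottContinuous g ∧
          ∀ i : I, (fun σ : Dinf D π => σ.1 i) ∘ g = f i) ∧
        (∀ g : E → Dinf D π,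
          (ScottContinuous g ∧ ∀ i : I, (fun σ : Dinf D π => σ.1 i) ∘ g = f i) →
          ∀ (y : E) (i : I), (g y).1 i = f i y)) := by

  classical
  have key : ∀ (d : Set (Dinf D π)), d.Nonempty → DirectedOn (· ≤ ·) d →
      ∀ a : Dinf D π, IsLUB d a → ∀ i, IsLUB ((fun σ : Dinf D π => σ.1 i) '' d) (a.1 i) := by
    intro d hne hdir a ha
    have hdne : ∀ i, ((fun σ : Dinf D π => σ.1 i) '' d).Nonempty := fun i => hne.image _
    have hddir : ∀ i, DirectedOn (· ≤ ·) ((fun σ : Dinf D π => σ.1 i) '' d) := by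
      intro i
      rintro _ ⟨x, hx, rfl⟩ _ ⟨y, hy, rfl⟩
      obtain ⟨z, hz, hxz, hyz⟩ := hdir x hx y hy
      exact ⟨z.1 i, ⟨z, hz, rfl⟩, hxz i, hyz i⟩
    choose s hs using fun i => hD i _ (hdne i) (hddir i)
    have hcompat : ∀ (i j : I) (h : i ≤ j), π i j h (s j) = s i := by
      intro i j h
      have h1 : IsLUB (π i j h '' ((fun σ : Dinf D π => σ.1 j) '' d)) (π i j h (s j)) :=
        hπc i j h (hdne j) (hddir j) (hs j)
      have h2 : π i j h '' ((fun σ : Dinf D π => σ.1 j) '' d)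
          = (fun σ : Dinf D π => σ.1 i) '' d := by
        rw [Set.image_image]
        exact Set.image_congr fun σ _ => σ.2 i j h
      rw [h2] at h1
      exact h1.unique (hs _)
    have hlub : IsLUB d (⟨s, hcompat⟩ : Dinf D π) := by
      constructor
      · intro x hx i
        exact (hs i).1 ⟨x, hx, rfl⟩
      · intro b hb i
        refine (hs i).2 ?_
        rintro _ ⟨x, hx, rfl⟩
        exact hb hx i
    have : a = (⟨s, hcompat⟩ : Dinf D π) := ha.unique hlub
    intro i
    rw [this]
    exact hs i
  refine ⟨?_, ?_, ?_⟩
  · intro i d hne hdir a ha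
    exact key d hne hdir a ha i
  · intro i j h
    funext σ
    exact σ.2 i j h
  · intro E _ hE f hfc hπf
    have hcompat : ∀ (y : E) (i j : I) (h : i ≤ j), π i j h (f j y) = f i y :=
      fun y i j h => congrFun (hπf i j h) y
    set g : E → Dinf D π := fun y => ⟨fun i => f i y, fun i j h => hcompat y i j h⟩ with hg
    have hgc : ScottContinuous g := by
      intro d hne hdir a ha
      constructor
      · rintro _ ⟨x, hx, rfl⟩
        intro i
        exact ((hfc i).monotone (ha.1 hx) : f i x ≤ f i a)
      · intro b hb i
        have : IsLUB (f i '' d) (f i a) := hfc i hne hdir ha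
        refine this.2 ?_
        rintro _ ⟨x, hx, rfl⟩
        exact hb ⟨x, hx, rfl⟩ i
    have hgp : ∀ i : I, (fun σ : Dinf D π => σ.1 i) ∘ g = f i := fun i => rfl
    refine ⟨hcompat, ⟨g, ⟨hgc, hgp⟩, ?_⟩, ?_⟩
    · rintro g' ⟨_, hg'p⟩
      funext y
      apply Subtype.ext
      funext i
      exact congrFun (hg'p i) y
    · rintro g' ⟨_, hg'p⟩ y i
      exact congrFun (hg'p i) y
end

section
/- Assume in addition that I is nonempty and directed (any two elements of I have a common upper bound). Then there exists a family of Scott-continuous functions ε∞ i : D i → D∞ such that: (1) for every i, the pair (ε∞ i, π∞ i) is an embedding-projection pair from D i to D∞, where π∞ i : D∞ → D i is the projection σ ↦ σ i; (2) ε∞ j ∘ ε i j = ε∞ i whenever i ≤ j; and (3) D∞ with the maps ε∞ i is the colimit of the diagram of embeddings: for every partial order E that is a dcpo and every family of Scott-continuous functions g i : D i → E satisfying g j ∘ ε i j = g i whenever i ≤ j, there is a unique Scott-continuous function g∞ : D∞ → E with g∞ ∘ ε∞ i = g i for every i. -/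
/-- Monotone image of a directed set is directed. -/
lemma DirectedOn.image_mono {α β : Type*} [Preorder α] [Preorder β] {f : α → β}
    (hf : Monotone f) {d : Set α} (hd : DirectedOn (· ≤ ·) d) :
    DirectedOn (· ≤ ·) (f '' d) := by
  rintro _ ⟨x, hx, rfl⟩ _ ⟨y, hy, rfl⟩
  obtain ⟨z, hz, hxz, hyz⟩ := hd x hx y hy
  exact ⟨f z, ⟨z, hz, rfl⟩, hf hxz, hf hyz⟩

/-- Composition of Scott-continuous maps is Scott continuous. -/
lemma ScottContinuous.comp' {α β γ : Type*} [Preorder α] [Preorder β] [Preorder γ]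
    {f : β → γ} {g : α → β} (hf : ScottContinuous f) (hg : ScottContinuous g) :
    ScottContinuous (f ∘ g) := by
  intro d hne hdir a ha
  have h1 := hg hne hdir ha
  have h2 := hf (hne.image g) (hdir.image_mono hg.monotone) h1
  rwa [← Set.image_comp] at h2

/-- If `I` is moreover nonempty and directed, there are Scott-continuous embeddings
`ε∞ i : D i → D∞` such that (1) each `(ε∞ i, π∞ i)` is an embedding-projection pair,
(2) `ε∞ j ∘ ε i j = ε∞ i` whenever `i ≤ j`, and (3) `D∞` with the maps `ε∞ i` is the
colimit of the diagram of embeddings: for every dcpo `E` and compatible family of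
Scott-continuous maps `g i : D i → E` there is a unique Scott-continuous
`g∞ : D∞ → E` with `g∞ ∘ ε∞ i = g i` for every `i`. -/
theorem Dinf_is_colimit {I : Type*} [Preorder I] {D : I → Type*} [∀ i, PartialOrder (D i)]
    (hI : Nonempty I) (hIdir : ∀ i j : I, ∃ k : I, i ≤ k ∧ j ≤ k)
    (hD : ∀ i, IsDcpo (D i))
    (ε : ∀ i j : I, i ≤ j → D i → D j) (π : ∀ i j : I, i ≤ j → D j → D i)
    (hεc : ∀ (i j : I) (h : i ≤ j), ScottContinuous (ε i j h))
    (hπc : ∀ (i j : I) (h : i ≤ j), ScottContinuous (π i j h))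
    (hsec : ∀ (i j : I) (h : i ≤ j) (x : D i), π i j h (ε i j h x) = x)
    (hdefl : ∀ (i j : I) (h : i ≤ j) (y : D j), ε i j h (π i j h y) ≤ y)
    (hεid : ∀ (i : I) (h : i ≤ i), ε i i h = id)
    (hπid : ∀ (i : I) (h : i ≤ i), π i i h = id)
    (hεcomp : ∀ (i j k : I) (hij : i ≤ j) (hjk : j ≤ k),
      ε i k (hij.trans hjk) = ε j k hjk ∘ ε i j hij)
    (hπcomp : ∀ (i j k : I) (hij : i ≤ j) (hjk : j ≤ k),
      π i k (hij.trans hjk) = π i j hij ∘ π j k hjk) :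
    ∃ εinf : ∀ i : I, D i → Dinf D π,
      (∀ i : I, ScottContinuous (εinf i)) ∧
      (∀ i : I, ScottContinuous (fun σ : Dinf D π => σ.1 i)) ∧
      (∀ (i : I) (x : D i), (εinf i x).1 i = x) ∧
      (∀ (i : I) (σ : Dinf D π), εinf i (σ.1 i) ≤ σ) ∧
      (∀ (i j : I) (h : i ≤ j), εinf j ∘ ε i j h = εinf i) ∧
      (∀ (E : Type*) [PartialOrder E], IsDcpo E →
        ∀ g : ∀ i : I, D i → E, (∀ i, ScottContinuous (g i)) →
          (∀ (i j : I) (h : i ≤ j), g j ∘ ε i j h = g i) →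
          ∃! ginf : Dinf D π → E, ScottContinuous ginf ∧
            ∀ i : I, ginf ∘ εinf i = g i) := by
  classical
  obtain ⟨i0⟩ := hI
  choose up hup1 hup2 using hIdir
  -- the candidate components
  set e : ∀ i j : I, D i → D j :=
    fun i j x => π j (up i j) (hup2 i j) (ε i (up i j) (hup1 i j) x) with he
  -- coherence: the component doesn't depend on the chosen upper bound
  have key : ∀ (i j k : I) (hik : i ≤ k) (hjk : j ≤ k) (x : D i),
      π j k hjk (ε i k hik x) = e i j x := by
    intro i j k hik hjk x
    have gen : ∀ (k' : I) (hik' : i ≤ k') (hjk' : j ≤ k') (m : I) (hk'm : k' ≤ m),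
        π j m (hjk'.trans hk'm) (ε i m (hik'.trans hk'm) x) = π j k' hjk' (ε i k' hik' x) := by
      intro k' hik' hjk' m hk'm
      rw [hπcomp j k' m hjk' hk'm, hεcomp i k' m hik' hk'm]
      simp [hsec]
    obtain ⟨m, hkm, hum⟩ : ∃ m, k ≤ m ∧ up i j ≤ m := ⟨up k (up i j), hup1 k (up i j), hup2 k (up i j)⟩
    have h1 := gen k hik hjk m hkm
    have h2 := gen (up i j) (hup1 i j) (hup2 i j) m hum
    exact h1.symm.trans h2
  -- the embeddings
  have mem : ∀ (i : I) (x : D i), (fun j => e i j x) ∈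
      {σ : ∀ i, D i | ∀ (a b : I) (h : a ≤ b), π a b h (σ b) = σ a} := by
    intro i x j j' hjj'
    obtain ⟨k, hik, hj'k⟩ : ∃ k, i ≤ k ∧ j' ≤ k := ⟨up i j', hup1 i j', hup2 i j'⟩
    have h1 : e i j' x = π j' k hj'k (ε i k hik x) := (key i j' k hik hj'k x).symm
    have h2 : π j j' hjj' (π j' k hj'k (ε i k hik x)) = π j k (hjj'.trans hj'k) (ε i k hik x) := by
      rw [hπcomp j j' k hjj' hj'k]; rfl
    simp only [h1, h2]
    exact key i j k hik (hjj'.trans hj'k) x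
  set εinf : ∀ i : I, D i → Dinf D π := fun i x => ⟨fun j => e i j x, mem i x⟩ with hεinf
  have εinf_apply : ∀ (i j : I) (x : D i), (εinf i x).1 j = e i j x := fun _ _ _ => rfl
  -- e i j is Scott continuous
  have e_scott : ∀ i j : I, ScottContinuous (e i j) := by
    intro i j
    exact (hπc j (up i j) (hup2 i j)).comp' (hεc i (up i j) (hup1 i j))
  have e_mono : ∀ i j : I, Monotone (e i j) := fun i j => (e_scott i j).monotone
  have εinf_mono : ∀ i : I, Monotone (εinf i) := by
    intro i x y hxy
    exact fun j => e_mono i j hxy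
  -- le in Dinf is pointwise
  have le_def : ∀ σ τ : Dinf D π, σ ≤ τ ↔ ∀ i, σ.1 i ≤ τ.1 i := by
    intro σ τ; rfl
  -- (3) section property
  have sec : ∀ (i : I) (x : D i), (εinf i x).1 i = x := by
    intro i x
    rw [εinf_apply, ← key i i i le_rfl le_rfl x, hπid i le_rfl, hεid i le_rfl]; rfl
  -- (4) deflation property
  have defl : ∀ (i : I) (σ : Dinf D π), εinf i (σ.1 i) ≤ σ := by
    intro i σ j
    obtain ⟨k, hik, hjk⟩ : ∃ k, i ≤ k ∧ j ≤ k := ⟨up i j, hup1 i j, hup2 i j⟩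
    have h1 : (εinf i (σ.1 i)).1 j = π j k hjk (ε i k hik (σ.1 i)) :=
      (key i j k hik hjk _).symm
    rw [h1, ← σ.2 i k hik]
    calc π j k hjk (ε i k hik (π i k hik (σ.1 k)))
        ≤ π j k hjk (σ.1 k) := (hπc j k hjk).monotone (hdefl i k hik _)
      _ = σ.1 j := σ.2 j k hjk
  -- (2) compatibility
  have compat : ∀ (i j : I) (h : i ≤ j), εinf j ∘ ε i j h = εinf i := by
    intro i j hij
    funext x
    apply Subtype.ext
    funext l
    obtain ⟨k, hjk, hlk⟩ : ∃ k, j ≤ k ∧ l ≤ k := ⟨up j l, hup1 j l, hup2 j l⟩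
    have hik : i ≤ k := hij.trans hjk
    show e j l (ε i j hij x) = e i l x
    rw [← key j l k hjk hlk, ← key i l k hik hlk, hεcomp i j k hij hjk]
    rfl
  -- Scott continuity of εinf i
  have εinf_scott : ∀ i : I, ScottContinuous (εinf i) := by
    intro i d hne hdir a ha
    constructor
    · rintro _ ⟨x, hx, rfl⟩
      exact εinf_mono i (ha.1 hx)
    · intro τ hτ j
      have hlub := e_scott i j hne hdir ha
      apply hlub.2
      rintro _ ⟨x, hx, rfl⟩
      exact hτ ⟨x, hx, rfl⟩ j
  -- pointwise lubs: any lub in Dinf is a pointwise lub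
  have plub : ∀ (d : Set (Dinf D π)), d.Nonempty → DirectedOn (· ≤ ·) d →
      ∀ σ : Dinf D π, IsLUB d σ → ∀ i : I,
        IsLUB ((fun τ : Dinf D π => τ.1 i) '' d) (σ.1 i) := by
    intro d hne hdir σ hσ
    have proj_mono : ∀ i : I, Monotone (fun τ : Dinf D π => τ.1 i) :=
      fun i _ _ h => h i
    have hdne : ∀ i : I, ((fun τ : Dinf D π => τ.1 i) '' d).Nonempty :=
      fun i => hne.image _
    have hddir : ∀ i : I, DirectedOn (· ≤ ·) ((fun τ : Dinf D π => τ.1 i) '' d) :=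
      fun i => hdir.image_mono (proj_mono i)
    choose ρ hρ using fun i => hD i _ (hdne i) (hddir i)
    have ρmem : ∀ (i j : I) (h : i ≤ j), π i j h (ρ j) = ρ i := by
      intro i j hij
      have h1 := hπc i j hij (hdne j) (hddir j) (hρ j)
      have h2 : (π i j hij '' ((fun τ : Dinf D π => τ.1 j) '' d)) =
          ((fun τ : Dinf D π => τ.1 i) '' d) := by
        rw [← Set.image_comp]
        apply Set.image_congr
        intro τ hτ
        exact τ.2 i j hij
      rw [h2] at h1
      exact h1.unique (hρ i)
    have hρlub : IsLUB d ⟨ρ, ρmem⟩ := by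
      constructor
      · intro τ hτ i
        exact (hρ i).1 ⟨τ, hτ, rfl⟩
      · intro τ hτ i
        exact (hρ i).2 (by rintro _ ⟨υ, hυ, rfl⟩; exact hτ hυ i)
    have : σ = ⟨ρ, ρmem⟩ := hσ.unique hρlub
    intro i
    rw [this]
    exact hρ i
  -- Scott continuity of projections
  have proj_scott : ∀ i : I, ScottContinuous (fun σ : Dinf D π => σ.1 i) := by
    intro i d hne hdir σ hσ
    exact plub d hne hdir σ hσ i
  refine ⟨εinf, εinf_scott, proj_scott, sec, defl, compat, ?_⟩
  -- the universal property
  intro E _ hE g hgc hgcomp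
  have gmono : ∀ i, Monotone (g i) := fun i => (hgc i).monotone
  -- the family i ↦ g i (σ i) is monotone in i
  have gstep : ∀ (i k : I) (h : i ≤ k) (σ : Dinf D π), g i (σ.1 i) ≤ g k (σ.1 k) := by
    intro i k hik σ
    have h1 : g i (σ.1 i) = g k (ε i k hik (σ.1 i)) := by
      rw [← hgcomp i k hik]; rfl
    rw [h1, ← σ.2 i k hik]
    exact gmono k (hdefl i k hik _)
  have Sne : ∀ σ : Dinf D π, (Set.range fun i => g i (σ.1 i)).Nonempty :=
    fun σ => ⟨g i0 (σ.1 i0), i0, rfl⟩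
  have Sdir : ∀ σ : Dinf D π, DirectedOn (· ≤ ·) (Set.range fun i => g i (σ.1 i)) := by
    rintro σ _ ⟨i, rfl⟩ _ ⟨j, rfl⟩
    obtain ⟨k, hik, hjk⟩ : ∃ k, i ≤ k ∧ j ≤ k := ⟨up i j, hup1 i j, hup2 i j⟩
    exact ⟨g k (σ.1 k), ⟨k, rfl⟩, gstep i k hik σ, gstep j k hjk σ⟩
  choose ginf hginf using fun σ : Dinf D π => hE _ (Sne σ) (Sdir σ)
  have ginf_mono : Monotone ginf := by
    intro σ τ hστ
    apply (hginf σ).2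
    rintro _ ⟨i, rfl⟩
    exact le_trans (gmono i (hστ i)) ((hginf τ).1 ⟨i, rfl⟩)
  have ginf_eq : ∀ (i : I) (x : D i), ginf (εinf i x) = g i x := by
    intro i x
    have hmem : g i x ∈ Set.range fun j => g j ((εinf i x).1 j) := ⟨i, by show g i ((εinf i x).1 i) = g i x; rw [sec]⟩
    have hub : g i x ∈ upperBounds (Set.range fun j => g j ((εinf i x).1 j)) := by
      rintro _ ⟨j, rfl⟩
      obtain ⟨k, hik, hjk⟩ : ∃ k, i ≤ k ∧ j ≤ k := ⟨up i j, hup1 i j, hup2 i j⟩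
      have h1 : (εinf i x).1 j = π j k hjk (ε i k hik x) := (key i j k hik hjk x).symm
      have h2 : g j (π j k hjk (ε i k hik x)) = g k (ε j k hjk (π j k hjk (ε i k hik x))) := by
        rw [← hgcomp j k hjk]; rfl
      have h3 : g k (ε j k hjk (π j k hjk (ε i k hik x))) ≤ g k (ε i k hik x) :=
        gmono k (hdefl j k hjk _)
      have h4 : g k (ε i k hik x) = g i x := by rw [← hgcomp i k hik]; rfl
      show g j ((εinf i x).1 j) ≤ g i x
      rw [h1, h2]
      rw [h4] at h3
      exact h3
    exact (hginf (εinf i x)).unique (IsGreatest.isLUB ⟨hmem, hub⟩)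
  have ginf_scott : ScottContinuous ginf := by
    intro d hne hdir σ hσ
    constructor
    · rintro _ ⟨τ, hτ, rfl⟩
      exact ginf_mono (hσ.1 hτ)
    · intro b hb
      apply (hginf σ).2
      rintro _ ⟨i, rfl⟩
      have hcomp := plub d hne hdir σ hσ i
      have hgl := hgc i (hne.image _) (hdir.image_mono (fun (a b : Dinf D π) (h : a ≤ b) => h i)) hcomp
      apply hgl.2
      rintro _ ⟨_, ⟨τ, hτ, rfl⟩, rfl⟩
      calc g i (τ.1 i) ≤ ginf τ := (hginf τ).1 ⟨i, rfl⟩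
        _ ≤ b := hb ⟨τ, hτ, rfl⟩
  refine ⟨ginf, ⟨ginf_scott, fun i => funext fun x => ginf_eq i x⟩, ?_⟩
  -- uniqueness
  rintro h ⟨hhs, hhg⟩
  funext σ
  -- σ is the lub of the εinf i (σ.1 i)
  have hσlub : IsLUB (Set.range fun i => εinf i (σ.1 i)) σ := by
    constructor
    · rintro _ ⟨i, rfl⟩
      exact defl i σ
    · intro τ hτ i
      have h1 : σ.1 i = (εinf i (σ.1 i)).1 i := (sec i (σ.1 i)).symm
      rw [h1]
      exact hτ ⟨i, rfl⟩ i
  have hσne : (Set.range fun i => εinf i (σ.1 i)).Nonempty := ⟨_, i0, rfl⟩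
  have hσdir : DirectedOn (· ≤ ·) (Set.range fun i => εinf i (σ.1 i)) := by
    rintro _ ⟨i, rfl⟩ _ ⟨j, rfl⟩
    obtain ⟨k, hik, hjk⟩ : ∃ k, i ≤ k ∧ j ≤ k := ⟨up i j, hup1 i j, hup2 i j⟩
    refine ⟨εinf k (σ.1 k), ⟨k, rfl⟩, ?_, ?_⟩
    · show εinf i (σ.1 i) ≤ εinf k (σ.1 k)
      have h1 : εinf i (σ.1 i) = εinf k (ε i k hik (σ.1 i)) := by
        rw [← compat i k hik]; rfl
      rw [h1, ← σ.2 i k hik]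
      exact εinf_mono k (hdefl i k hik _)
    · show εinf j (σ.1 j) ≤ εinf k (σ.1 k)
      have h1 : εinf j (σ.1 j) = εinf k (ε j k hjk (σ.1 j)) := by
        rw [← compat j k hjk]; rfl
      rw [h1, ← σ.2 j k hjk]
      exact εinf_mono k (hdefl j k hjk _)
  have h1 := hhs hσne hσdir hσlub
  have h2 := ginf_scott hσne hσdir hσlub
  have himg : h '' (Set.range fun i => εinf i (σ.1 i)) =
      ginf '' (Set.range fun i => εinf i (σ.1 i)) := by
    apply Set.image_congr
    rintro _ ⟨i, rfl⟩
    have := congrFun (hhg i) (σ.1 i)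
    simp only [Function.comp_apply] at this
    rw [this, ginf_eq]
  rw [himg] at h1
  exact h1.unique h2
end

section
/- The partially ordered type D∞ is itself a dcpo: every nonempty directed subset A of D∞ has a least upper bound, and this least upper bound is computed pointwise, i.e., its component at each index i is the least upper bound in D i of the set { σ i | σ ∈ A }. -/
/-- `D∞` is a dcpo, with least upper bounds of nonempty directed subsets computed pointwise:
the component at each index `i` of the least upper bound of `A` is the least upper bound
in `D i` of `{ σ i | σ ∈ A }`. -/
theorem Dinf_isDcpo_pointwise {I : Type*} [Preorder I] {D : I → Type*}
    [∀ i, PartialOrder (D i)]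
    (hD : ∀ i, IsDcpo (D i))
    (ε : ∀ i j : I, i ≤ j → D i → D j) (π : ∀ i j : I, i ≤ j → D j → D i)
    (hεc : ∀ (i j : I) (h : i ≤ j), ScottContinuous (ε i j h))
    (hπc : ∀ (i j : I) (h : i ≤ j), ScottContinuous (π i j h))
    (hsec : ∀ (i j : I) (h : i ≤ j) (x : D i), π i j h (ε i j h x) = x)
    (hdefl : ∀ (i j : I) (h : i ≤ j) (y : D j), ε i j h (π i j h y) ≤ y)
    (hεid : ∀ (i : I) (h : i ≤ i), ε i i h = id)
    (hπid : ∀ (i : I) (h : i ≤ i), π i i h = id)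
    (hεcomp : ∀ (i j k : I) (hij : i ≤ j) (hjk : j ≤ k),
      ε i k (hij.trans hjk) = ε j k hjk ∘ ε i j hij)
    (hπcomp : ∀ (i j k : I) (hij : i ≤ j) (hjk : j ≤ k),
      π i k (hij.trans hjk) = π i j hij ∘ π j k hjk) :
    ∀ A : Set (Dinf D π), A.Nonempty → DirectedOn (· ≤ ·) A →
      ∃ σ : Dinf D π, IsLUB A σ ∧
        ∀ i : I, IsLUB ((fun τ : Dinf D π => τ.1 i) '' A) (σ.1 i) := by
  intro A hA hdir
  -- pointwise image sets
  set Ai : ∀ i, Set (D i) := fun i => (fun τ : Dinf D π => τ.1 i) '' A with hAi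
  have hAine : ∀ i, (Ai i).Nonempty := fun i => hA.image _
  have hAidir : ∀ i, DirectedOn (· ≤ ·) (Ai i) := by
    intro i x hx y hy
    obtain ⟨σ, hσ, rfl⟩ := hx
    obtain ⟨τ, hτ, rfl⟩ := hy
    obtain ⟨ρ, hρ, h1, h2⟩ := hdir σ hσ τ hτ
    exact ⟨ρ.1 i, ⟨ρ, hρ, rfl⟩, h1 i, h2 i⟩
  choose s hs using fun i => hD i (Ai i) (hAine i) (hAidir i)
  have hcoh : ∀ (i j : I) (h : i ≤ j), π i j h (s j) = s i := by
    intro i j h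
    have h1 : IsLUB (π i j h '' Ai j) (π i j h (s j)) :=
      hπc i j h (hAine j) (hAidir j) (hs j)
    have himg : π i j h '' Ai j = Ai i := by
      ext x
      constructor
      · rintro ⟨y, ⟨τ, hτ, rfl⟩, rfl⟩
        exact ⟨τ, hτ, (τ.2 i j h).symm⟩
      · rintro ⟨τ, hτ, rfl⟩
        exact ⟨τ.1 j, ⟨τ, hτ, rfl⟩, τ.2 i j h⟩
        
    rw [himg] at h1
    exact h1.unique (hs i)
  refine ⟨⟨s, hcoh⟩, ⟨⟨fun τ hτ i => (hs i).1 ⟨τ, hτ, rfl⟩,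
    fun υ hυ i => (hs i).2 ?_⟩, fun i => hs i⟩⟩
  rintro x ⟨τ, hτ, rfl⟩
  exact hυ hτ i
end

section
/- The lifting Part X is the free pointed dcpo on a type X: let X be a type and let D be a partial order that is a dcpo and has a least element ⊥. For every function f : X → D there is a unique function f' : Part X → D such that f' is Scott continuous, f' Part.none = ⊥, and f' (Part.some x) = f x for every x : X. Here Part X carries its usual partial order: a ≤ b iff every value of a is a value of b. -/
/-- The lifting `Part X` is the free pointed dcpo on the type `X`: for every dcpo `D` with
least element `bot` and every `f : X → D`, there is a unique Scott-continuous
`f' : Part X → D` with `f' Part.none = bot` and `f' (Part.some x) = f x` for all `x`. -/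
theorem part_is_free_pointed_dcpo {X : Type*} {D : Type*} [PartialOrder D]
    (hD : IsDcpo D) (bot : D) (hbot : ∀ x : D, bot ≤ x) (f : X → D) :
    ∃! f' : Part X → D, ScottContinuous f' ∧ f' Part.none = bot ∧
      ∀ x : X, f' (Part.some x) = f x := by
  classical
  set F : Part X → D := fun a => if h : a.Dom then f (a.get h) else bot with hF
  have Fnone : F Part.none = bot := by simp [hF, Part.none]
  have Fsome : ∀ x, F (Part.some x) = f x := fun x => by simp [hF]
  refine ⟨F, ⟨?_, Fnone, Fsome⟩, ?_⟩
  · -- Scott continuity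
    intro d hne hdir a ha
    by_cases h : a.Dom
    · -- the lub is some element, which must belong to d
      have hex : ∃ b ∈ d, b.Dom := by
        by_contra hc
        push_neg at hc
        have hub : Part.none ∈ upperBounds d := by
          intro b hb x hx
          exact absurd (Part.dom_iff_mem.mpr ⟨x, hx⟩) (hc b hb)
        have := ha.2 hub
        exact (this _ (Part.get_mem h)).fst
      obtain ⟨b, hbd, hb⟩ := hex
      have hba : b ≤ a := ha.1 hbd
      have hgets : b.get hb ∈ a := hba _ (Part.get_mem hb)
      have hFb : F b = F a := by
        simp only [hF, dif_pos h, dif_pos hb]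
        congr 1
        exact Part.get_eq_of_mem hgets h ▸ rfl
      constructor
      · rintro c ⟨b', hb'd, rfl⟩
        by_cases hb' : b'.Dom
        · have : b'.get hb' ∈ a := ha.1 hb'd _ (Part.get_mem hb')
          simp only [hF, dif_pos h, dif_pos hb']
          rw [Part.get_eq_of_mem this h]
        · simp only [hF, dif_neg hb']
          exact hbot _
      · intro u hu
        have : F b ≤ u := hu ⟨b, hbd, rfl⟩
        rwa [hFb] at this
    · -- the lub is none, so every element of d is none
      have hall : ∀ b ∈ d, F b = bot := by
        intro b hb
        have hba : b ≤ a := ha.1 hb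
        have : ¬ b.Dom := fun hbd => h (Part.dom_iff_mem.mpr ⟨_, hba _ (Part.get_mem hbd)⟩)
        simp [hF, this]
      have hFa : F a = bot := by simp [hF, h]
      constructor
      · rintro c ⟨b, hb, rfl⟩
        rw [hall b hb, hFa]
      · intro u hu
        obtain ⟨b, hb⟩ := hne
        have := hu ⟨b, hb, rfl⟩
        rwa [hall b hb, ← hFa] at this
  · -- uniqueness
    rintro g ⟨-, hgnone, hgsome⟩
    funext a
    by_cases h : a.Dom
    · have : a = Part.some (a.get h) := Part.ext'  (by simp [h]) (fun _ _ => rfl)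
      rw [this, hgsome, Fsome]
    · have : a = Part.none := Part.eq_none_iff'.mpr h
      rw [this, hgnone, Fnone]
end

section
/- The rounded ideal completion of a poset is the free dcpo on it: let P be a partial order (so that ≤ on P is reflexive and transitive and hence an abstract basis), and let D be a partial order that is a dcpo. For every monotone function f : P → D there is a unique Scott-continuous function f' : Idl(P, ≤) → D such that f' (↓x) = f x for every x : P, where ↓x = {y : P | y ≤ x} is the principal ideal of x. -/
/-- An ideal for a relation `r`: a nonempty, `r`-directed lower subset. -/
def IsIdeal {B : Type*} (r : B → B → Prop) (I : Set B) : Prop :=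
  I.Nonempty ∧ DirectedOn r I ∧ ∀ x y : B, r x y → y ∈ I → x ∈ I

/-- The rounded ideal completion of `(B, r)`: the ideals of `r`, ordered by inclusion
(as a subtype of `Set B`). -/
abbrev Idl {B : Type*} (r : B → B → Prop) : Type _ := {I : Set B // IsIdeal r I}

/-- The principal ideal `↓x = {y | y ≤ x}` of an element of a partial order,
as an element of `Idl (· ≤ ·)`. -/
def principalIdeal {P : Type*} [PartialOrder P] (x : P) : Idl ((· ≤ ·) : P → P → Prop) :=
  ⟨{y : P | y ≤ x},
    ⟨x, le_refl x⟩,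
    fun a ha b hb => ⟨x, le_refl x, ha, hb⟩,
    fun a b hab hb => le_trans hab hb⟩

/-- The rounded ideal completion of a poset is the free dcpo on it: for every dcpo `D`
and monotone `f : P → D` there is a unique Scott-continuous `f' : Idl(P, ≤) → D` with
`f' (↓x) = f x` for every `x : P`. -/
theorem idl_is_free_dcpo_on_poset {P : Type*} [PartialOrder P]
    {D : Type*} [PartialOrder D] (hD : IsDcpo D)
    (f : P → D) (hf : Monotone f) :
    ∃! f' : Idl ((· ≤ ·) : P → P → Prop) → D, ScottContinuous f' ∧
      ∀ x : P, f' (principalIdeal x) = f x := by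
  classical
  have key : ∀ I : Idl ((· ≤ ·) : P → P → Prop),
      (f '' I.1).Nonempty ∧ DirectedOn (· ≤ ·) (f '' I.1) := by
    intro I
    obtain ⟨hne, hdir, hlow⟩ := I.2
    refine ⟨hne.image f, ?_⟩
    rintro a ⟨x, hx, rfl⟩ b ⟨y, hy, rfl⟩
    obtain ⟨z, hz, hxz, hyz⟩ := hdir x hx y hy
    exact ⟨f z, ⟨z, hz, rfl⟩, hf hxz, hf hyz⟩
  choose g hg using fun I => hD _ (key I).1 (key I).2
  -- each ideal is the LUB of principal ideals of its elements
  have hprinLUB : ∀ I : Idl ((· ≤ ·) : P → P → Prop),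
      IsLUB (principalIdeal '' I.1) I := by
    intro I
    constructor
    · rintro J ⟨x, hx, rfl⟩
      intro y hy
      exact I.2.2.2 y x hy hx
    · intro J hJ x hx
      exact hJ ⟨x, hx, rfl⟩ (le_refl x)
  refine ⟨g, ⟨?_, ?_⟩, ?_⟩
  · -- Scott continuity of g
    intro d hne hdir A hA
    -- A.1 is the union of the ideals in d
    have hAeq : A.1 = ⋃ I ∈ d, (I : Idl ((· ≤ ·) : P → P → Prop)).1 := by
      apply le_antisymm
      · -- the union is an ideal and an upper bound
        obtain ⟨I₀, hI₀⟩ := hne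
        have hUideal : IsIdeal ((· ≤ ·) : P → P → Prop)
            (⋃ I ∈ d, (I : Idl ((· ≤ ·) : P → P → Prop)).1) := by
          refine ⟨?_, ?_, ?_⟩
          · obtain ⟨x, hx⟩ := I₀.2.1
            exact ⟨x, Set.mem_biUnion hI₀ hx⟩
          · rintro x hx y hy
            simp only [Set.mem_iUnion] at hx hy
            obtain ⟨I, hI, hxI⟩ := hx
            obtain ⟨J, hJ, hyJ⟩ := hy
            obtain ⟨K, hK, hIK, hJK⟩ := hdir I hI J hJ
            obtain ⟨z, hz, hxz, hyz⟩ := K.2.2.1 x (hIK hxI) y (hJK hyJ)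
            exact ⟨z, Set.mem_biUnion hK hz, hxz, hyz⟩
          · intro x y hxy hy
            simp only [Set.mem_iUnion] at hy ⊢
            obtain ⟨I, hI, hyI⟩ := hy
            exact ⟨I, hI, I.2.2.2 x y hxy hyI⟩
        have hub : (⟨_, hUideal⟩ : Idl ((· ≤ ·) : P → P → Prop)) ∈ upperBounds d := by
          intro I hI x hx
          exact Set.mem_biUnion hI hx
        exact hA.2 hub
      · exact Set.iUnion₂_subset fun I hI => hA.1 hI
    constructor
    · rintro b ⟨I, hI, rfl⟩
      refine (hg I).2 fun c hc => (hg A).1 ?_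
      obtain ⟨x, hx, rfl⟩ := hc
      exact ⟨x, hA.1 hI hx, rfl⟩
    · intro b hb
      refine (hg A).2 ?_
      rintro c ⟨x, hx, rfl⟩
      rw [hAeq] at hx
      simp only [Set.mem_iUnion] at hx
      obtain ⟨I, hI, hxI⟩ := hx
      exact le_trans ((hg I).1 ⟨x, hxI, rfl⟩) (hb ⟨I, hI, rfl⟩)
  · -- g agrees with f on principal ideals
    intro x
    refine (hg (principalIdeal x)).unique ?_
    constructor
    · rintro b ⟨y, hy, rfl⟩
      exact hf hy
    · intro b hb
      exact hb ⟨x, le_refl x, rfl⟩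
  · -- uniqueness
    rintro h ⟨hsc, hprin⟩
    funext I
    have hSne : (principalIdeal '' I.1).Nonempty := I.2.1.image _
    have hSdir : DirectedOn (· ≤ ·) (principalIdeal '' I.1) := by
      rintro a ⟨x, hx, rfl⟩ b ⟨y, hy, rfl⟩
      obtain ⟨z, hz, hxz, hyz⟩ := I.2.2.1 x hx y hy
      exact ⟨principalIdeal z, ⟨z, hz, rfl⟩,
        fun w hw => le_trans hw hxz, fun w hw => le_trans hw hyz⟩
    have hL := hsc hSne hSdir (hprinLUB I)
    have himg : h '' (principalIdeal '' I.1) = f '' I.1 := by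
      rw [← Set.image_comp]
      exact Set.image_congr fun x _ => hprin x
    rw [himg] at hL
    exact hL.unique (hg I)
end

section
/- Every dcpo with a basis is a continuous retract of the rounded ideal completion of its basis order: let D be a partial order that is a dcpo with a basis β : B → D, and define the relation ⊑ᴮ on B by b ⊑ᴮ b' iff β b ≤ β b' (a preorder, hence an abstract basis). Then there exist Scott-continuous functions s : D → Idl(B, ⊑ᴮ) and r : Idl(B, ⊑ᴮ) → D with r (s x) = x for every x : D. -/
/-- `x` is way below `y`. -/
def WayBelow {α : Type*} [Preorder α] (x y : α) : Prop :=
  ∀ d : Set α, d.Nonempty → DirectedOn (· ≤ ·) d → ∀ a : α, IsLUB d a → y ≤ a →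
    ∃ z ∈ d, x ≤ z

/-- `β : B → D` is a basis for the dcpo `D`. -/
def IsBasis {B D : Type*} [Preorder D] (β : B → D) : Prop :=
  ∀ x : D, ∃ d : Set D, d.Nonempty ∧ DirectedOn (· ≤ ·) d ∧ d ⊆ Set.range β ∧
    (∀ y ∈ d, WayBelow y x) ∧ IsLUB d x

theorem wayBelow_le' {D : Type*} [Preorder D] {x y : D} (h : WayBelow x y) : x ≤ y := by
  obtain ⟨z, hz, hle⟩ := h {y} ⟨y, rfl⟩
    (by intro a ha b hb; exact ⟨y, rfl, by simp_all, by simp_all⟩) y isLUB_singleton le_rfl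
  rwa [Set.mem_singleton_iff.mp hz] at hle

theorem wayBelow_left {D : Type*} [Preorder D] {x x' y : D} (hx : x' ≤ x) (h : WayBelow x y) :
    WayBelow x' y := fun d hne hdir a ha hya =>
  let ⟨z, hz, hle⟩ := h d hne hdir a ha hya; ⟨z, hz, hx.trans hle⟩

theorem wayBelow_right {D : Type*} [Preorder D] {x y y' : D} (h : WayBelow x y) (hy : y ≤ y') :
    WayBelow x y' := fun d hne hdir a ha h' => h d hne hdir a ha (hy.trans h')

/-- Every dcpo with a basis `β : B → D` is a continuous retract of the rounded ideal
completion of the preorder `b ⊑ᴮ b' ↔ β b ≤ β b'` on `B`: there are Scott-continuous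
`s : D → Idl(B, ⊑ᴮ)` and `r : Idl(B, ⊑ᴮ) → D` with `r (s x) = x` for all `x`. -/
theorem dcpo_with_basis_is_retract_of_idl {B D : Type*} [PartialOrder D]
    (hD : IsDcpo D) (β : B → D) (hβ : IsBasis β) :
    ∃ (s : D → Idl (fun b b' : B => β b ≤ β b'))
      (r : Idl (fun b b' : B => β b ≤ β b') → D),
      ScottContinuous s ∧ ScottContinuous r ∧ ∀ x : D, r (s x) = x := by
  classical
  set rel : B → B → Prop := fun b b' => β b ≤ β b' with hrel
  have hIdeal : ∀ x : D, IsIdeal rel {b | WayBelow (β b) x} := by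
    intro x
    obtain ⟨d, hdne, hddir, hdrange, hdwb, hdlub⟩ := hβ x
    refine ⟨?_, ?_, ?_⟩
    · obtain ⟨y, hy⟩ := hdne
      obtain ⟨b, rfl⟩ := hdrange hy
      exact ⟨b, hdwb _ hy⟩
    · rintro b hb b' hb'
      obtain ⟨z, hz, hbz⟩ := hb d hdne hddir x hdlub le_rfl
      obtain ⟨z', hz', hbz'⟩ := hb' d hdne hddir x hdlub le_rfl
      obtain ⟨w, hw, hzw, hz'w⟩ := hddir z hz z' hz'
      obtain ⟨c, rfl⟩ := hdrange hw
      exact ⟨c, hdwb _ hw, hbz.trans hzw, hbz'.trans hz'w⟩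
    · intro b b' hbb' hb'
      exact wayBelow_left hbb' hb'
  have hslub : ∀ x : D, IsLUB (β '' {b | WayBelow (β b) x}) x := by
    intro x
    obtain ⟨d, hdne, hddir, hdrange, hdwb, hdlub⟩ := hβ x
    constructor
    · rintro _ ⟨b, hb, rfl⟩; exact wayBelow_le' hb
    · intro u hu
      apply hdlub.2
      intro y hy
      obtain ⟨b, rfl⟩ := hdrange hy
      exact hu ⟨b, hdwb _ hy, rfl⟩
  set s : D → Idl rel := fun x => ⟨{b | WayBelow (β b) x}, hIdeal x⟩ with hs
  have himg : ∀ I : Idl rel, ∃ a, IsLUB (β '' I.1) a := by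
    rintro ⟨I, hne, hdir, hlow⟩
    refine hD _ (hne.image β) ?_
    rintro _ ⟨b, hb, rfl⟩ _ ⟨b', hb', rfl⟩
    obtain ⟨c, hc, h1, h2⟩ := hdir b hb b' hb'
    exact ⟨β c, ⟨c, hc, rfl⟩, h1, h2⟩
  choose r hr using himg
  have hsmono : ∀ {x y : D}, x ≤ y → s x ≤ s y := by
    intro x y hxy
    show (s x).1 ⊆ (s y).1
    intro b hb
    exact wayBelow_right hb hxy
  have hrmono : ∀ {I J : Idl rel}, I ≤ J → r I ≤ r J := by
    intro I J hIJ
    refine (hr I).2 ?_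
    rintro _ ⟨c, hc, rfl⟩
    exact (hr J).1 ⟨c, hIJ hc, rfl⟩
  refine ⟨s, r, ?_, ?_, fun x => (hr (s x)).unique (hslub x)⟩
  · -- Scott continuity of s
    intro d' hne hdir a ha
    constructor
    · rintro _ ⟨x, hx, rfl⟩
      exact hsmono (ha.1 hx)
    · rintro J hJ
      show (s a).1 ⊆ J.1
      intro b hb
      -- T = union of images of section sets over d'
      set T : Set D := ⋃ x ∈ d', β '' {c | WayBelow (β c) x} with hT
      have hTne : T.Nonempty := by
        obtain ⟨x, hx⟩ := hne
        obtain ⟨c, hc⟩ := (hIdeal x).1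
        exact ⟨β c, Set.mem_biUnion hx ⟨c, hc, rfl⟩⟩
      have hTdir : DirectedOn (· ≤ ·) T := by
        rintro z hz z' hz'
        simp only [hT, Set.mem_iUnion] at hz hz'
        obtain ⟨x, hx, c, hc, rfl⟩ := hz
        obtain ⟨x', hx', c', hc', rfl⟩ := hz'
        obtain ⟨x'', hx'', h1, h2⟩ := hdir x hx x' hx'
        obtain ⟨e, he, hce, hc'e⟩ := (hIdeal x'').2.1 c (wayBelow_right hc h1)
          c' (wayBelow_right hc' h2)
        exact ⟨β e, Set.mem_biUnion hx'' ⟨e, he, rfl⟩, hce, hc'e⟩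
      have hTlub : IsLUB T a := by
        constructor
        · rintro z hz
          simp only [hT, Set.mem_iUnion] at hz
          obtain ⟨x, hx, c, hc, rfl⟩ := hz
          exact (wayBelow_le' hc).trans (ha.1 hx)
        · intro u hu
          refine ha.2 ?_
          intro x hx
          refine (hslub x).2 ?_
          intro z hz
          exact hu (Set.mem_biUnion hx hz)
      obtain ⟨z, hz, hbz⟩ := hb T hTne hTdir a hTlub le_rfl
      simp only [hT, Set.mem_iUnion] at hz
      obtain ⟨x, hx, c, hc, rfl⟩ := hz
      have hcJ : c ∈ J.1 := hJ ⟨x, hx, rfl⟩ hc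
      exact J.2.2.2 b c hbz hcJ
  · -- Scott continuity of r
    intro S hne hdir K hK
    have hUideal : IsIdeal rel (⋃ I ∈ S, (I : Idl rel).1) := by
      refine ⟨?_, ?_, ?_⟩
      · obtain ⟨I, hI⟩ := hne
        obtain ⟨c, hc⟩ := I.2.1
        exact ⟨c, Set.mem_biUnion hI hc⟩
      · rintro c hc c' hc'
        simp only [Set.mem_iUnion] at hc hc'
        obtain ⟨I, hI, hcI⟩ := hc
        obtain ⟨I', hI', hcI'⟩ := hc'
        obtain ⟨J, hJ, h1, h2⟩ := hdir I hI I' hI'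
        obtain ⟨e, he, hce, hc'e⟩ := J.2.2.1 c (h1 hcI) c' (h2 hcI')
        exact ⟨e, Set.mem_biUnion hJ he, hce, hc'e⟩
      · intro b c hbc hc
        simp only [Set.mem_iUnion] at hc ⊢
        obtain ⟨I, hI, hcI⟩ := hc
        exact ⟨I, hI, I.2.2.2 b c hbc hcI⟩
    have hKU : K = ⟨⋃ I ∈ S, (I : Idl rel).1, hUideal⟩ := by
      refine hK.unique ?_
      constructor
      · intro I hI
        show I.1 ⊆ _
        exact Set.subset_biUnion_of_mem hI
      · intro J hJ
        show (⋃ I ∈ S, (I : Idl rel).1) ⊆ J.1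
        exact Set.iUnion₂_subset fun I hI => hJ hI
    constructor
    · rintro _ ⟨I, hI, rfl⟩
      exact hrmono (hK.1 hI)
    · intro u hu
      refine (hr K).2 ?_
      rintro _ ⟨c, hc, rfl⟩
      rw [hKU] at hc
      simp only [Set.mem_iUnion] at hc
      obtain ⟨I, hI, hcI⟩ := hc
      exact ((hr I).1 ⟨c, hcI, rfl⟩).trans (hu ⟨I, hI, rfl⟩)
end

section
/- Let (B, ≺) be an abstract basis and let I and J be ideals of (B, ≺). Then I is way below J in Idl(B, ≺) if and only if there exists x ∈ J with I ⊆ ↓x. -/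
/-- Given `r y x`, there is an ideal containing `y` and contained in `↓x`,
built as the downward closure of an interpolating chain. -/
lemma exists_chain_ideal {B : Type*} {r : B → B → Prop}
    (htrans : Transitive r)
    (hbin : ∀ x y : B, r x y → ∃ z : B, r x z ∧ r z y)
    {y x : B} (h : r y x) :
    ∃ C : Set B, IsIdeal r C ∧ y ∈ C ∧ C ⊆ {z : B | r z x} := by
  choose f hf1 hf2 using fun (a : B) (ha : r a x) => hbin a x ha
  let s : ℕ → {a : B // r a x} := fun n =>
    Nat.rec ⟨f y h, hf2 y h⟩ (fun _ p => ⟨f p.1 p.2, hf2 p.1 p.2⟩) n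
  have hs2 : ∀ n, r (s n).1 (s (n + 1)).1 := fun n => hf1 (s n).1 (s n).2
  have hle : ∀ i j, i < j → r (s i).1 (s j).1 := by
    intro i j h
    induction j with
    | zero => omega
    | succ k ih =>
      rcases Nat.lt_succ_iff_lt_or_eq.mp h with h' | h'
      · exact htrans (ih h') (hs2 k)
      · subst h'; exact hs2 i
  refine ⟨{z | ∃ n, r z (s n).1}, ⟨⟨y, 0, hf1 y h⟩, ?_, ?_⟩, ⟨0, hf1 y h⟩, ?_⟩
  · rintro z ⟨n, hn⟩ w ⟨m, hm⟩
    refine ⟨(s (max n m + 1)).1, ⟨max n m + 2, hs2 (max n m + 1)⟩, ?_, ?_⟩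
    · exact htrans hn (hle n (max n m + 1) (by omega))
    · exact htrans hm (hle m (max n m + 1) (by omega))
  · rintro a b hab ⟨n, hn⟩
    exact ⟨n, htrans hab hn⟩
  · rintro z ⟨n, hn⟩
    exact htrans hn (s n).2

/-- For ideals `I`, `J` of an abstract basis `(B, ≺)`: `I` is way below `J` in
`Idl(B, ≺)` iff there exists `x ∈ J` with `I ⊆ ↓x`. -/
theorem wayBelow_iff_subset_principal {B : Type*} (r : B → B → Prop)
    (htrans : Transitive r)
    (hnull : ∀ x : B, ∃ y : B, r y x)
    (hbin : ∀ x y : B, r x y → ∃ z : B, r x z ∧ r z y)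
    (I J : Idl r) :
    WayBelow I J ↔ ∃ x ∈ (J : Set B), (I : Set B) ⊆ {y : B | r y x} := by
  constructor
  · intro hwb
    -- the directed family of "small" ideals below J
    set D : Set (Idl r) :=
      {K | (K : Set B) ⊆ (J : Set B) ∧ ∃ x ∈ (J : Set B), (K : Set B) ⊆ {y : B | r y x}}
      with hD
    -- D is nonempty
    obtain ⟨y0, hy0⟩ := J.2.1
    obtain ⟨x0, hx0J, hy0x0, -⟩ := J.2.2.1 y0 hy0 y0 hy0
    obtain ⟨C0, hC0, hy0C0, hC0x0⟩ := exists_chain_ideal htrans hbin hy0x0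
    have hC0J : C0 ⊆ (J : Set B) := fun z hz => J.2.2.2 z x0 (hC0x0 hz) hx0J
    have hne : D.Nonempty := ⟨⟨C0, hC0⟩, hC0J, x0, hx0J, hC0x0⟩
    -- D is directed
    have hdir : DirectedOn (· ≤ ·) D := by
      rintro K ⟨hKJ, x, hxJ, hKx⟩ K' ⟨hK'J, x', hx'J, hK'x'⟩
      obtain ⟨z, hzJ, hxz, hx'z⟩ := J.2.2.1 x hxJ x' hx'J
      obtain ⟨w, hwJ, hzw, -⟩ := J.2.2.1 z hzJ z hzJ
      obtain ⟨C, hC, hzC, hCw⟩ := exists_chain_ideal htrans hbin hzw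
      have hCJ : C ⊆ (J : Set B) := fun u hu => J.2.2.2 u w (hCw hu) hwJ
      refine ⟨⟨C, hC⟩, ⟨hCJ, w, hwJ, hCw⟩, ?_, ?_⟩
      · intro u hu
        exact hC.2.2 u z (htrans (hKx hu) hxz) hzC
      · intro u hu
        exact hC.2.2 u z (htrans (hK'x' hu) hx'z) hzC
    -- J is the lub of D
    have hlub : IsLUB D J := by
      constructor
      · rintro K ⟨hKJ, -⟩
        exact hKJ
      · intro a ha
        intro y hy
        obtain ⟨x, hxJ, hyx, -⟩ := J.2.2.1 y hy y hy
        obtain ⟨C, hC, hyC, hCx⟩ := exists_chain_ideal htrans hbin hyx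
        have hCJ : C ⊆ (J : Set B) := fun z hz => J.2.2.2 z x (hCx hz) hxJ
        have : (⟨C, hC⟩ : Idl r) ≤ a := ha ⟨hCJ, x, hxJ, hCx⟩
        exact this hyC
    obtain ⟨K, hKD, hIK⟩ := hwb D hne hdir J hlub le_rfl
    obtain ⟨-, x, hxJ, hKx⟩ := hKD
    exact ⟨x, hxJ, fun y hy => hKx (hIK hy)⟩
  · rintro ⟨x, hxJ, hIx⟩ d hne hdir a hlub hJa
    -- the union of a directed family of ideals is an ideal
    set U : Set B := {b | ∃ K ∈ d, b ∈ (K : Set B)} with hU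
    have hUideal : IsIdeal r U := by
      refine ⟨?_, ?_, ?_⟩
      · obtain ⟨K, hK⟩ := hne
        obtain ⟨b, hb⟩ := K.2.1
        exact ⟨b, K, hK, hb⟩
      · rintro u ⟨K, hKd, hu⟩ v ⟨K', hK'd, hv⟩
        obtain ⟨M, hMd, hKM, hK'M⟩ := hdir K hKd K' hK'd
        obtain ⟨w, hwM, huw, hvw⟩ := M.2.2.1 u (hKM hu) v (hK'M hv)
        exact ⟨w, ⟨M, hMd, hwM⟩, huw, hvw⟩
      · rintro u v huv ⟨K, hKd, hv⟩
        exact ⟨K, hKd, K.2.2.2 u v huv hv⟩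
    have hub : ∀ K ∈ d, K ≤ (⟨U, hUideal⟩ : Idl r) := by
      intro K hKd b hb
      exact ⟨K, hKd, hb⟩
    have haU : a ≤ (⟨U, hUideal⟩ : Idl r) := hlub.2 hub
    have hxU : x ∈ U := haU (hJa hxJ)
    obtain ⟨K, hKd, hxK⟩ := hxU
    refine ⟨K, hKd, fun y hy => ?_⟩
    exact K.2.2.2 y x (hIx hy) hxK
end

section
/- Unary interpolation: let D be a partial order that is a dcpo with a basis β : B → D, and let x, y : D. If x ≪ y, then there exists b : B with x ≪ β b and β b ≪ y. -/
/-- Unary interpolation: in a dcpo with basis `β`, if `x ≪ y` then there is a basis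
element `β b` with `x ≪ β b ≪ y`. -/
theorem unary_interpolation {B D : Type*} [PartialOrder D]
    (hD : IsDcpo D) (β : B → D) (hβ : IsBasis β) (x y : D) (hxy : WayBelow x y) :
    ∃ b : B, WayBelow x (β b) ∧ WayBelow (β b) y := by
  obtain ⟨d, hdne, hddir, hdsub, hdwb, hdlub⟩ := hβ y
  -- for each c, choose a basis set E c
  choose E hEne hEdir hEsub hEwb hElub using hβ
  -- the union of the E c for c ∈ d
  set M : Set D := {z | ∃ c ∈ d, z ∈ E c} with hM
  have hMne : M.Nonempty := by
    obtain ⟨c, hc⟩ := hdne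
    obtain ⟨z, hz⟩ := hEne c
    exact ⟨z, c, hc, hz⟩
  have hMdir : DirectedOn (· ≤ ·) M := by
    rintro z1 ⟨c1, hc1, hz1⟩ z2 ⟨c2, hc2, hz2⟩
    obtain ⟨c3, hc3, hc13, hc23⟩ := hddir c1 hc1 c2 hc2
    obtain ⟨w1, hw1, hzw1⟩ := hEwb c1 z1 hz1 (E c3) (hEne c3) (hEdir c3) c3 (hElub c3) hc13
    obtain ⟨w2, hw2, hzw2⟩ := hEwb c2 z2 hz2 (E c3) (hEne c3) (hEdir c3) c3 (hElub c3) hc23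
    obtain ⟨w, hw, hw1w, hw2w⟩ := hEdir c3 w1 hw1 w2 hw2
    exact ⟨w, ⟨c3, hc3, hw⟩, hzw1.trans hw1w, hzw2.trans hw2w⟩
  have hMlub : IsLUB M y := by
    constructor
    · rintro z ⟨c, hc, hz⟩
      exact le_trans ((hElub c).1 hz) (hdlub.1 hc)
    · intro u hu
      refine hdlub.2 fun c hc => (hElub c).2 fun z hz => hu ⟨c, hc, hz⟩
  obtain ⟨z, ⟨c, hc, hz⟩, hxz⟩ := hxy M hMne hMdir y hMlub le_rfl
  obtain ⟨b, hb⟩ := hdsub hc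
  refine ⟨b, ?_, hb ▸ hdwb c hc⟩
  intro e hene hedir a ha hba
  obtain ⟨w, hw, hzw⟩ := hEwb c z hz e hene hedir a ha (hb ▸ hba)
  exact ⟨w, hw, hxz.trans hzw⟩
end

section
/- Bases are preserved by continuous retractions: let D and E be partial orders that are dcpos, and let s : D → E and r : E → D be Scott-continuous functions with r (s x) = x for every x : D. If β : B → E is a basis for E, then r ∘ β : B → D is a basis for D. -/
/-- Bases are preserved by continuous retractions: if `r : E → D` is a Scott-continuous
retraction with Scott-continuous section `s : D → E`, and `β : B → E` is a basis for `E`,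
then `r ∘ β` is a basis for `D`. -/
theorem basis_of_continuous_retract {B D E : Type*} [PartialOrder D] [PartialOrder E]
    (hD : IsDcpo D) (hE : IsDcpo E)
    (s : D → E) (r : E → D) (hs : ScottContinuous s) (hr : ScottContinuous r)
    (hretr : ∀ x : D, r (s x) = x)
    (β : B → E) (hβ : IsBasis β) :
    IsBasis (r ∘ β) := by
  intro x
  obtain ⟨d, hne, hdir, hsub, hwb, hlub⟩ := hβ (s x)
  refine ⟨r '' d, hne.image r, ?_, ?_, ?_, ?_⟩
  · rintro _ ⟨a, ha, rfl⟩ _ ⟨b, hb, rfl⟩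
    obtain ⟨c, hc, hac, hbc⟩ := hdir a ha b hb
    exact ⟨r c, ⟨c, hc, rfl⟩, hr.monotone hac, hr.monotone hbc⟩
  · rintro _ ⟨a, ha, rfl⟩
    obtain ⟨b, rfl⟩ := hsub ha
    exact ⟨b, rfl⟩
  · rintro _ ⟨a, ha, rfl⟩ d' hne' hdir' c hlub' hxc
    obtain ⟨z, hz, haz⟩ := hwb a ha (s '' d') (hne'.image s)
      (by rintro _ ⟨u, hu, rfl⟩ _ ⟨v, hv, rfl⟩
          obtain ⟨w, hw, huw, hvw⟩ := hdir' u hu v hv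
          exact ⟨s w, ⟨w, hw, rfl⟩, hs.monotone huw, hs.monotone hvw⟩)
      (s c) (hs hne' hdir' hlub') (hs.monotone hxc)
    obtain ⟨z', hz', rfl⟩ := hz
    exact ⟨z', hz', by simpa [hretr] using hr.monotone haz⟩
  · have := hr hne hdir hlub
    rwa [hretr] at this
end

section
/- There exist a type D, a partial order on D making it a dcpo with a least element, with at least two distinct elements, such that D is algebraic (it has a basis all of whose values are compact), together with an order isomorphism between D and the type of Scott-continuous functions from D to D ordered pointwise. That is, Scott's model D∞ of the untyped λ-calculus can be taken to be a nontrivial pointed algebraic dcpo isomorphic to its own Scott-continuous self-exponential. -/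
/-- `D` is a nontrivial pointed *algebraic* dcpo order-isomorphic to its Scott-continuous
self-exponential (ordered pointwise). -/
def NontrivialPointedAlgebraicDcpoSelfExp (D : Type) [PartialOrder D] : Prop :=
  IsDcpo D ∧ (∃ bot : D, ∀ x : D, bot ≤ x) ∧ (∃ x y : D, x ≠ y) ∧
    (∃ (B : Type) (β : B → D), IsBasis β ∧ ∀ b : B, WayBelow (β b) (β b)) ∧
    (∀ f g : {f : D → D // ScottContinuous f}, f ≤ g ↔ ∀ x : D, f.1 x ≤ g.1 x) ∧
    Nonempty ({f : D → D // ScottContinuous f} ≃o D)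

namespace Dinfty

noncomputable def StageAux : ℕ → Σ' (α : Type), PartialOrder α
  | 0 => ⟨Bool, inferInstance⟩
  | n+1 =>
    let p := StageAux n
    letI : PartialOrder p.1 := p.2
    ⟨p.1 →o p.1, inferInstance⟩

def Stage (n : ℕ) : Type := (StageAux n).1

noncomputable instance instStagePO (n : ℕ) : PartialOrder (Stage n) := (StageAux n).2

def oh {n : ℕ} (f : Stage (n+1)) : Stage n →o Stage n := f
def mkS {n : ℕ} (f : Stage n →o Stage n) : Stage (n+1) := f

@[simp] lemma oh_mkS {n : ℕ} (f : Stage n →o Stage n) : oh (mkS f) = f := rfl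
@[simp] lemma mkS_oh {n : ℕ} (f : Stage (n+1)) : mkS (oh f) = f := rfl
lemma oh_le_oh {n : ℕ} {f g : Stage (n+1)} (h : f ≤ g) : oh f ≤ oh g := h
lemma mkS_le_mkS {n : ℕ} {f g : Stage n →o Stage n} (h : f ≤ g) : mkS f ≤ mkS g := h
lemma stage_ext {n : ℕ} {f g : Stage (n+1)} (h : ∀ d, oh f d = oh g d) : f = g := by
  have : oh f = oh g := OrderHom.ext _ _ (funext h)
  simpa using congrArg mkS this

instance instStageFinite (n : ℕ) : Finite (Stage n) := by
  induction n with
  | zero => exact inferInstanceAs (Finite Bool)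
  | succ n ih =>
    exact Finite.of_injective (fun (f : Stage (n+1)) => (oh f : Stage n → Stage n))
      (fun f g h => by
        have : oh f = oh g := OrderHom.ext _ _ h
        simpa using congrArg mkS this)

lemma exists_greatest {α : Type*} [PartialOrder α] [Finite α] {d : Set α}
    (hne : d.Nonempty) (hd : DirectedOn (· ≤ ·) d) : ∃ m ∈ d, ∀ x ∈ d, x ≤ m := by
  obtain ⟨m, hm, hmax⟩ := Set.Finite.exists_maximalFor id d (Set.toFinite d) hne
  refine ⟨m, hm, fun x hx => ?_⟩
  obtain ⟨z, hz, hmz, hxz⟩ := hd m hm x hx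
  have := hmax hz hmz
  simp only [id] at this
  exact le_trans hxz this

noncomputable def t : ∀ m n, Stage m →o Stage n
  | 0, 0 => OrderHom.id
  | 0, n+1 =>
    ⟨fun b => mkS (OrderHom.const _ (t 0 n b)),
      fun a b h => mkS_le_mkS (fun _ => (t 0 n).monotone h)⟩
  | m+1, 0 =>
    ⟨fun f => t m 0 (oh f (t 0 m false)),
      fun f g h => (t m 0).monotone (oh_le_oh h _)⟩
  | m+1, n+1 =>
    ⟨fun f => mkS ((t m n).comp ((oh f).comp (t n m))),
      fun f g h => mkS_le_mkS (fun d => (t m n).monotone (oh_le_oh h _))⟩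
termination_by m n => m + n

@[simp] lemma t_zero_zero (b : Stage 0) : t 0 0 b = b := by simp [t]
lemma t_zero_succ (n : ℕ) (b : Stage 0) :
    t 0 (n+1) b = mkS (OrderHom.const _ (t 0 n b)) := by rw [t]; rfl
lemma t_succ_zero (m : ℕ) (f : Stage (m+1)) :
    t (m+1) 0 f = t m 0 (oh f (t 0 m false)) := by rw [t]; rfl
lemma t_succ_succ (m n : ℕ) (f : Stage (m+1)) :
    t (m+1) (n+1) f = mkS ((t m n).comp ((oh f).comp (t n m))) := by rw [t]; rfl

@[simp] lemma t_zero_succ_apply (n : ℕ) (b : Stage 0) (d : Stage n) :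
    oh (t 0 (n+1) b) d = t 0 n b := by rw [t_zero_succ]; rfl
@[simp] lemma t_succ_succ_apply (m n : ℕ) (f : Stage (m+1)) (d : Stage n) :
    oh (t (m+1) (n+1) f) d = t m n (oh f (t n m d)) := by rw [t_succ_succ]; rfl

/-- Joint coherence. -/
lemma L1L3 : ∀ (s n k : ℕ), n + k ≤ s →
    (∀ d : Stage n, t (k+1) k (t n (k+1) d) = t n k d) ∧
    (∀ f : Stage n, t (n+1) k (t n (n+1) f) = t n k f) := by
  intro s
  induction s with
  | zero =>
    intro n k h
    obtain ⟨rfl, rfl⟩ : n = 0 ∧ k = 0 := by omega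
    constructor <;>
    · intro d
      rw [t_succ_zero]
      simp
  | succ s ih =>
    intro n k h
    constructor
    · -- L1
      intro d
      match n, k with
      | 0, 0 => rw [t_succ_zero]; simp
      | 0, k+1 =>
        refine stage_ext fun e => ?_
        simp only [t_succ_succ_apply, t_zero_succ_apply]
        exact (ih 0 k (by omega)).1 d
      | n+1, 0 =>
        rw [t_succ_zero 0]
        simp only [t_zero_zero, t_zero_zero false, t_succ_succ_apply]
        rw [t_succ_succ_apply n 0 d false, ← t_succ_zero]
      | n+1, k+1 =>
        refine stage_ext fun e => ?_
        simp only [t_succ_succ_apply]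
        rw [(ih k n (by omega)).2 e, (ih n k (by omega)).1]
    · -- L3
      intro f
      match n, k with
      | 0, 0 => rw [t_succ_zero]; simp
      | 0, k+1 =>
        refine stage_ext fun e => ?_
        simp only [t_succ_succ_apply, t_zero_succ_apply, t_zero_zero]
      | n+1, 0 =>
        rw [t_succ_zero (n+1), t_succ_succ_apply]
        rw [(ih 0 n (by omega)).1 false, (ih n 0 (by omega)).2, ← t_succ_zero]
      | n+1, k+1 =>
        refine stage_ext fun e => ?_
        simp only [t_succ_succ_apply]
        rw [(ih k n (by omega)).1 e, (ih n k (by omega)).2]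

lemma L1 (n k : ℕ) (d : Stage n) : t (k+1) k (t n (k+1) d) = t n k d :=
  (L1L3 (n+k) n k le_rfl).1 d

lemma L3 (n k : ℕ) (f : Stage n) : t (n+1) k (t n (n+1) f) = t n k f :=
  (L1L3 (n+k) n k le_rfl).2 f

lemma t_self (n : ℕ) (d : Stage n) : t n n d = d := by
  induction n with
  | zero => simp
  | succ n ih =>
    refine stage_ext fun e => ?_
    simp only [t_succ_succ_apply, ih]


lemma stage_le_iff {n : ℕ} {f g : Stage (n+1)} : f ≤ g ↔ ∀ d, oh f d ≤ oh g d :=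
  @OrderHom.le_def (Stage n) (Stage n) _ _ (oh f) (oh g)

lemma lemPE (n : ℕ) (d : Stage n) : t (n+1) n (t n (n+1) d) = d := by
  rw [L1, t_self]

lemma lemEP : ∀ (n : ℕ) (f : Stage (n+1)), t n (n+1) (t (n+1) n f) ≤ f := by
  intro n
  induction n with
  | zero =>
    intro f
    refine stage_le_iff.mpr fun d => ?_
    rw [t_zero_succ_apply, t_succ_zero, t_zero_zero, t_zero_zero]
    exact (oh f).monotone (by rw [t_zero_zero false]; exact Bool.false_le d)
  | succ n ih =>
    intro f
    refine stage_le_iff.mpr fun d => ?_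
    rw [t_succ_succ_apply, t_succ_succ_apply]
    calc t n (n+1) (t (n+1) n (oh f (t n (n+1) (t (n+1) n d))))
        ≤ oh f (t n (n+1) (t (n+1) n d)) := ih _
      _ ≤ oh f d := (oh f).monotone (ih d)

/-- Joint: L7 (down-step decomposition) and L8 (up-step decomposition). -/
lemma L7L8 : ∀ (s : ℕ),
    (∀ k ≤ s, ∀ f : Stage (s+1), t s k (t (s+1) s f) = t (s+1) k f) ∧
    (∀ n ≤ s, ∀ d : Stage n, t s (s+1) (t n s d) = t n (s+1) d) := by
  intro s
  induction s with
  | zero =>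
    constructor
    · intro k hk f
      obtain rfl : k = 0 := by omega
      rw [t_zero_zero]
    · intro n hn d
      obtain rfl : n = 0 := by omega
      rw [t_zero_zero]
  | succ s ih =>
    obtain ⟨ih7, ih8⟩ := ih
    constructor
    · intro k hk f
      match k, hk with
      | 0, _ =>
        rw [t_succ_zero s, t_succ_succ_apply, ih8 0 (by omega) false, ih7 0 (by omega),
          ← t_succ_zero]
      | j+1, hk =>
        have hj : j ≤ s := by omega
        refine stage_ext fun e => ?_
        rw [t_succ_succ_apply s j, t_succ_succ_apply (s+1) s, ih8 j hj,
          ih7 j hj, t_succ_succ_apply]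
    · intro n hn d
      match n, hn with
      | 0, _ =>
        refine stage_ext fun e => ?_
        rw [t_succ_succ_apply, t_zero_succ_apply, t_zero_succ_apply, ih8 0 (by omega)]
      | j+1, hn =>
        rcases Nat.lt_or_ge j s with hj' | hj'
        · have hj : j ≤ s := by omega
          refine stage_ext fun e => ?_
          rw [t_succ_succ_apply s (s+1), t_succ_succ_apply j s, ih7 j hj,
            t_succ_succ_apply j (s+1), ih8 j hj]
        · obtain rfl : j = s := by omega
          rw [t_self]

lemma L7 {n k : ℕ} (hk : k ≤ n) (f : Stage (n+1)) : t n k (t (n+1) n f) = t (n+1) k f :=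
  (L7L8 n).1 k hk f

lemma L8 {m n : ℕ} (hn : n ≤ m) (d : Stage n) : t m (m+1) (t n m d) = t n (m+1) d :=
  (L7L8 m).2 n hn d

lemma lemPEgen : ∀ {n k : ℕ}, n ≤ k → ∀ d : Stage n, t k n (t n k d) = d := by
  intro n k hk
  induction k, hk using Nat.le_induction with
  | base => intro d; rw [t_self, t_self]
  | succ k hk ih =>
    intro d
    rw [← L8 hk, ← L7 hk, lemPE, ih]

lemma lemEPgen : ∀ {n k : ℕ}, n ≤ k → ∀ f : Stage k, t n k (t k n f) ≤ f := by
  intro n k hk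
  induction k, hk using Nat.le_induction with
  | base => intro f; rw [t_self, t_self]
  | succ k hk ih =>
    intro f
    rw [← L8 hk, ← L7 hk]
    calc t k (k+1) (t n k (t k n (t (k+1) k f)))
        ≤ t k (k+1) (t (k+1) k f) := (t k (k+1)).monotone (ih _)
      _ ≤ f := lemEP k f


/-- The inverse limit D∞. -/
def Dinf : Type := {x : ∀ n, Stage n // ∀ n, t (n+1) n (x (n+1)) = x n}

noncomputable instance : PartialOrder Dinf :=
  inferInstanceAs (PartialOrder {x : ∀ n, Stage n // ∀ n, t (n+1) n (x (n+1)) = x n})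

lemma dle_iff {x y : Dinf} : x ≤ y ↔ ∀ n, x.1 n ≤ y.1 n := Iff.rfl

lemma dext {x y : Dinf} (h : ∀ n, x.1 n = y.1 n) : x = y := Subtype.ext (funext h)

/-- coherence along arbitrary distances -/
lemma coh {k n : ℕ} (hk : k ≤ n) (x : Dinf) : t n k (x.1 n) = x.1 k := by
  induction n, hk using Nat.le_induction with
  | base => exact t_self _ _
  | succ n hk ih => rw [← L7 hk, x.2 n, ih]

/-- the embedding of a finite stage into D∞ -/
noncomputable def emb (n : ℕ) (d : Stage n) : Dinf :=
  ⟨fun k => t n k d, fun k => L1 n k d⟩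

@[simp] lemma emb_apply (n k : ℕ) (d : Stage n) : (emb n d).1 k = t n k d := rfl

lemma emb_mono {n : ℕ} : Monotone (emb n) := fun d d' h => dle_iff.mpr fun k =>
  (t n k).monotone h

@[simp] lemma emb_self_apply (n : ℕ) (d : Stage n) : (emb n d).1 n = d := t_self n d

lemma emb_le_self (x : Dinf) (n : ℕ) : emb n (x.1 n) ≤ x := by
  refine dle_iff.mpr fun k => ?_
  rcases le_or_gt k n with hk | hk
  · rw [emb_apply, coh hk]
  · have hk' : n ≤ k := le_of_lt hk
    rw [emb_apply, ← coh hk' x]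
    exact lemEPgen hk' _

lemma emb_succ (n : ℕ) (d : Stage n) : emb n d = emb (n+1) (t n (n+1) d) :=
  dext fun k => (L3 n k d).symm

lemma emb_chain_mono (x : Dinf) : Monotone fun n => emb n (x.1 n) := by
  refine monotone_nat_of_le_succ fun n => ?_
  rw [emb_succ n (x.1 n)]
  refine emb_mono ?_
  rw [← x.2 n]
  exact lemEP n _

lemma isLUB_emb (x : Dinf) : IsLUB (Set.range fun n => emb n (x.1 n)) x := by
  constructor
  · rintro _ ⟨n, rfl⟩
    exact emb_le_self x n
  · intro u hu
    refine dle_iff.mpr fun k => ?_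
    have : emb k (x.1 k) ≤ u := hu ⟨k, rfl⟩
    have h2 := dle_iff.mp this k
    rwa [emb_self_apply] at h2

/-- least upper bounds in D∞, componentwise, with attained components -/
lemma exists_isLUB {d : Set Dinf} (hne : d.Nonempty) (hd : DirectedOn (· ≤ ·) d) :
    ∃ a : Dinf, IsLUB d a ∧ ∀ n, ∃ x ∈ d, x.1 n = a.1 n := by
  have key : ∀ n, ∃ m : Stage n, (∃ x ∈ d, x.1 n = m) ∧ ∀ x ∈ d, x.1 n ≤ m := by
    intro n
    have hne' : ((fun x : Dinf => x.1 n) '' d).Nonempty := hne.image _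
    have hd' : DirectedOn (· ≤ ·) ((fun x : Dinf => x.1 n) '' d) := by
      rintro _ ⟨x, hx, rfl⟩ _ ⟨y, hy, rfl⟩
      obtain ⟨z, hz, hxz, hyz⟩ := hd x hx y hy
      exact ⟨z.1 n, ⟨z, hz, rfl⟩, dle_iff.mp hxz n, dle_iff.mp hyz n⟩
    obtain ⟨m, hm, hub⟩ := exists_greatest hne' hd'
    obtain ⟨x, hx, rfl⟩ := hm
    exact ⟨x.1 n, ⟨x, hx, rfl⟩, fun y hy => hub _ ⟨y, hy, rfl⟩⟩
  choose m hmem hub using key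
  have hcoh : ∀ n, t (n+1) n (m (n+1)) = m n := by
    intro n
    obtain ⟨x, hx, hxn⟩ := hmem (n+1)
    refine le_antisymm ?_ ?_
    · rw [← hxn, x.2 n]
      exact hub n x hx
    · obtain ⟨y, hy, hyn⟩ := hmem n
      rw [← hyn, ← y.2 n]
      exact (t (n+1) n).monotone (hub (n+1) y hy)
  refine ⟨⟨m, hcoh⟩, ⟨?_, ?_⟩, ?_⟩
  · intro x hx
    exact dle_iff.mpr fun n => hub n x hx
  · intro u hu
    refine dle_iff.mpr fun n => ?_
    obtain ⟨x, hx, hxn⟩ := hmem n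
    show m n ≤ u.1 n
    rw [← hxn]
    exact dle_iff.mp (hu hx) n
  · intro n
    exact hmem n

lemma isDcpo_Dinf : IsDcpo Dinf := fun d hne hd =>
  ⟨(exists_isLUB hne hd).choose, (exists_isLUB hne hd).choose_spec.1⟩

/-- attainment of components of any lub of a directed set -/
lemma lub_component_attained {d : Set Dinf} (hne : d.Nonempty) (hd : DirectedOn (· ≤ ·) d)
    {a : Dinf} (ha : IsLUB d a) (n : ℕ) : ∃ x ∈ d, x.1 n = a.1 n := by
  obtain ⟨b, hb, hatt⟩ := exists_isLUB hne hd
  obtain rfl : b = a := hb.unique ha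
  exact hatt n


/-- the approximating chain for function application in D∞ -/
noncomputable def chain (x y : Dinf) (n : ℕ) : Dinf := emb n (oh (x.1 (n+1)) (y.1 n))

lemma chain_mono (x y : Dinf) : Monotone (chain x y) := by
  refine monotone_nat_of_le_succ fun n => ?_
  rw [chain, emb_succ]
  refine emb_mono ?_
  have hx : oh (x.1 (n+1)) (y.1 n) =
      t (n+1) n (oh (x.1 (n+2)) (t n (n+1) (y.1 n))) := by
    conv_lhs => rw [← x.2 (n+1)]
    rw [t_succ_succ_apply]
  rw [hx]
  calc t n (n+1) (t (n+1) n (oh (x.1 (n+2)) (t n (n+1) (y.1 n))))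
      ≤ oh (x.1 (n+2)) (t n (n+1) (y.1 n)) := lemEP n _
    _ ≤ oh (x.1 (n+2)) (y.1 (n+1)) := by
        refine (oh (x.1 (n+2))).monotone ?_
        conv_lhs => rw [← y.2 n]
        exact lemEP n _

lemma chain_le_chain {x x' y y' : Dinf} (hx : x ≤ x') (hy : y ≤ y') (n : ℕ) :
    chain x y n ≤ chain x' y' n := by
  refine emb_mono ?_
  calc oh (x.1 (n+1)) (y.1 n) ≤ oh (x.1 (n+1)) (y'.1 n) :=
        (oh (x.1 (n+1))).monotone (dle_iff.mp hy n)
    _ ≤ oh (x'.1 (n+1)) (y'.1 n) := oh_le_oh (dle_iff.mp hx (n+1)) _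

lemma chain_directedOn (x y : Dinf) : DirectedOn (· ≤ ·) (Set.range (chain x y)) := by
  rintro _ ⟨i, rfl⟩ _ ⟨j, rfl⟩
  exact ⟨chain x y (max i j), ⟨max i j, rfl⟩,
    chain_mono x y (le_max_left i j), chain_mono x y (le_max_right i j)⟩

/-- the reflexive-domain application `Phi x y` -/
noncomputable def Phi (x y : Dinf) : Dinf :=
  (exists_isLUB (Set.range_nonempty (chain x y)) (chain_directedOn x y)).choose

lemma Phi_isLUB (x y : Dinf) : IsLUB (Set.range (chain x y)) (Phi x y) :=
  (exists_isLUB (Set.range_nonempty (chain x y)) (chain_directedOn x y)).choose_spec.1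

lemma Phi_attained (x y : Dinf) (k : ℕ) : ∃ n, (chain x y n).1 k = (Phi x y).1 k := by
  obtain ⟨z, hz, h⟩ :=
    (exists_isLUB (Set.range_nonempty (chain x y)) (chain_directedOn x y)).choose_spec.2 k
  obtain ⟨n, rfl⟩ := hz
  exact ⟨n, h⟩

lemma chain_le_Phi (x y : Dinf) (n : ℕ) : chain x y n ≤ Phi x y :=
  (Phi_isLUB x y).1 ⟨n, rfl⟩

lemma Phi_le {x y : Dinf} {u : Dinf} (h : ∀ n, chain x y n ≤ u) : Phi x y ≤ u :=
  (Phi_isLUB x y).2 fun _ ⟨n, hn⟩ => hn ▸ h n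

lemma Phi_mono {x x' y y' : Dinf} (hx : x ≤ x') (hy : y ≤ y') : Phi x y ≤ Phi x' y' :=
  Phi_le fun n => le_trans (chain_le_chain hx hy n) (chain_le_Phi x' y' n)

/-- `Phi x` is Scott continuous -/
lemma Phi_scott (x : Dinf) : ScottContinuous (Phi x) := by
  intro d hne hd a ha
  constructor
  · rintro _ ⟨y, hy, rfl⟩
    exact Phi_mono le_rfl (ha.1 hy)
  · intro u hu
    refine dle_iff.mpr fun k => ?_
    obtain ⟨N, hN⟩ := Phi_attained x a k
    obtain ⟨y, hy, hyN⟩ := lub_component_attained hne hd ha N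
    have hchain : (chain x a N).1 k = (chain x y N).1 k := by
      rw [chain, chain, ← hyN]
    have h1 : (chain x y N).1 k ≤ (Phi x y).1 k := dle_iff.mp (chain_le_Phi x y N) k
    have h2 : Phi x y ≤ u := hu ⟨y, hy, rfl⟩
    rw [← hN, hchain]
    exact le_trans h1 (dle_iff.mp h2 k)


lemma directedOn_range_of_monotone {c : ℕ → Dinf} (hc : Monotone c) :
    DirectedOn (· ≤ ·) (Set.range c) := by
  rintro _ ⟨i, rfl⟩ _ ⟨j, rfl⟩
  exact ⟨c (max i j), ⟨max i j, rfl⟩, hc (le_max_left i j), hc (le_max_right i j)⟩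

/-- the finite approximations of a monotone self-map of D∞ -/
noncomputable def psiF (f : Dinf → Dinf) (hf : Monotone f) (n : ℕ) : Stage n →o Stage n :=
  ⟨fun d => (f (emb n d)).1 n, fun d d' h => dle_iff.mp (hf (emb_mono h)) n⟩

/-- the element of D∞ representing a monotone self-map -/
noncomputable def Psi (f : Dinf → Dinf) (hf : Monotone f) : Dinf := by
  refine ⟨fun k => Nat.rec (t 1 0 (mkS (psiF f hf 0))) (fun n _ => mkS (psiF f hf n)) k,
    fun n => ?_⟩
  match n with
  | 0 => rfl
  | n+1 =>
    show t (n+2) (n+1) (mkS (psiF f hf (n+1))) = mkS (psiF f hf n)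
    refine stage_ext fun d => ?_
    rw [t_succ_succ_apply, oh_mkS, oh_mkS]
    show t (n+1) n ((f (emb (n+1) (t n (n+1) d))).1 (n+1)) = (f (emb n d)).1 n
    rw [← emb_succ, (f (emb n d)).2 n]

@[simp] lemma Psi_apply_succ (f : Dinf → Dinf) (hf : Monotone f) (n : ℕ) :
    (Psi f hf).1 (n+1) = mkS (psiF f hf n) := rfl

lemma Psi_mono {f g : Dinf → Dinf} {hf : Monotone f} {hg : Monotone g}
    (h : ∀ y, f y ≤ g y) : Psi f hf ≤ Psi g hg := by
  have hsucc : ∀ n, (Psi f hf).1 (n+1) ≤ (Psi g hg).1 (n+1) := by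
    intro n
    refine stage_le_iff.mpr fun d => ?_
    rw [Psi_apply_succ, Psi_apply_succ, oh_mkS, oh_mkS]
    exact dle_iff.mp (h (emb n d)) n
  refine dle_iff.mpr fun n => ?_
  match n with
  | 0 =>
    rw [← (Psi f hf).2 0, ← (Psi g hg).2 0]
    exact (t 1 0).monotone (hsucc 0)
  | n+1 => exact hsucc n

/-- Ψ ∘ Φ = id -/
lemma Psi_Phi (x : Dinf) : Psi (Phi x) (fun _ _ h => Phi_mono le_rfl h) = x := by
  set hm : Monotone (Phi x) := fun _ _ h => Phi_mono le_rfl h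
  have hsucc : ∀ n, (Psi (Phi x) hm).1 (n+1) = x.1 (n+1) := by
    intro n
    rw [Psi_apply_succ]
    refine stage_ext fun d => ?_
    rw [oh_mkS]
    show (Phi x (emb n d)).1 n = oh (x.1 (n+1)) d
    have hiii : (chain x (emb n d) n).1 n = oh (x.1 (n+1)) d := by
      rw [chain, emb_self_apply, emb_self_apply]
    have hii : ∀ m, (chain x (emb n d) m).1 n ≤ oh (x.1 (n+1)) d := by
      intro m
      rcases le_or_gt m n with hm' | hm'
      · rw [← hiii]
        exact dle_iff.mp (chain_mono x (emb n d) hm') n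
      · have hnm : n ≤ m := le_of_lt hm'
        have : (chain x (emb n d) m).1 n = oh (x.1 (n+1)) d := by
          rw [chain, emb_apply, emb_apply, ← coh (Nat.succ_le_succ hnm) x,
            t_succ_succ_apply]
        rw [this]
    refine le_antisymm ?_ ?_
    · obtain ⟨N, hN⟩ := Phi_attained x (emb n d) n
      rw [← hN]
      exact hii N
    · rw [← hiii]
      exact dle_iff.mp (chain_le_Phi x (emb n d) n) n
  refine dext fun n => ?_
  match n with
  | 0 => rw [← (Psi (Phi x) hm).2 0, ← x.2 0, hsucc 0]
  | n+1 => exact hsucc n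

/-- Φ ∘ Ψ = id on Scott-continuous maps -/
lemma Phi_Psi (f : Dinf → Dinf) (hf : ScottContinuous f) (y : Dinf) :
    Phi (Psi f hf.monotone) y = f y := by
  have hchain : ∀ m, chain (Psi f hf.monotone) y m = emb m ((f (emb m (y.1 m))).1 m) := by
    intro m
    rw [chain, Psi_apply_succ, oh_mkS]
    rfl
  have hlub : IsLUB (Set.range (chain (Psi f hf.monotone) y)) (f y) := by
    constructor
    · rintro _ ⟨m, rfl⟩
      rw [hchain m]
      calc emb m ((f (emb m (y.1 m))).1 m) ≤ f (emb m (y.1 m)) :=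
            emb_le_self (f (emb m (y.1 m))) m
        _ ≤ f y := hf.monotone (emb_le_self y m)
    · intro u hu
      have him : IsLUB (f '' Set.range fun m => emb m (y.1 m)) (f y) :=
        hf (Set.range_nonempty _)
          (directedOn_range_of_monotone (emb_chain_mono y)) (isLUB_emb y)
      refine him.2 ?_
      rintro _ ⟨_, ⟨m, rfl⟩, rfl⟩
      refine dle_iff.mpr fun k => ?_
      set M := max m k with hM
      have h1 : f (emb m (y.1 m)) ≤ f (emb M (y.1 M)) :=
        hf.monotone (emb_chain_mono y (le_max_left m k))
      have h2 : (f (emb M (y.1 M))).1 k =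
          (emb M ((f (emb M (y.1 M))).1 M)).1 k := by
        rw [emb_apply, coh (le_max_right m k)]
      calc (f (emb m (y.1 m))).1 k ≤ (f (emb M (y.1 M))).1 k := dle_iff.mp h1 k
        _ = (emb M ((f (emb M (y.1 M))).1 M)).1 k := h2
        _ ≤ u.1 k := by
            rw [← hchain M]
            exact dle_iff.mp (hu ⟨M, rfl⟩) k
  exact (Phi_isLUB (Psi f hf.monotone) y).unique hlub


lemma t_zero_false_le : ∀ (k : ℕ) (z : Stage k), t 0 k false ≤ z := by
  intro k
  induction k with
  | zero => intro z; rw [t_zero_zero false]; exact Bool.false_le z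
  | succ k ih =>
    intro z
    refine stage_le_iff.mpr fun d => ?_
    rw [t_zero_succ_apply (b := false)]
    exact ih _

lemma bot_le_all (x : Dinf) : emb 0 false ≤ x :=
  dle_iff.mpr fun k => by rw [emb_apply 0 k false]; exact t_zero_false_le k (x.1 k)

lemma Dinf_nontrivial : emb 0 false ≠ emb 0 true := by
  intro h
  have := congrArg (fun z : Dinf => z.1 0) h
  simp only [emb_self_apply 0 false, emb_self_apply 0 true] at this
  exact Bool.false_ne_true this

lemma emb_wayBelow (n : ℕ) (d : Stage n) (x : Dinf) (h : d ≤ x.1 n) :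
    WayBelow (emb n d) x := by
  intro d' hne hd' a hlub hxa
  obtain ⟨z, hz, hzn⟩ := lub_component_attained hne hd' hlub n
  refine ⟨z, hz, le_trans ?_ (emb_le_self z n)⟩
  refine emb_mono (le_trans h ?_)
  rw [hzn]
  exact dle_iff.mp hxa n

lemma isBasis_emb : IsBasis (fun b : Σ n, Stage n => emb b.1 b.2) := by
  intro x
  refine ⟨Set.range (fun n => emb n (x.1 n)), Set.range_nonempty _,
    directedOn_range_of_monotone (emb_chain_mono x), ?_, ?_, isLUB_emb x⟩
  · rintro _ ⟨n, rfl⟩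
    exact ⟨⟨n, x.1 n⟩, rfl⟩
  · rintro _ ⟨n, rfl⟩
    exact emb_wayBelow n (x.1 n) x le_rfl

lemma emb_compact (b : Σ n, Stage n) :
    WayBelow (emb b.1 b.2) (emb b.1 b.2) :=
  emb_wayBelow b.1 b.2 (emb b.1 b.2) (le_of_eq (emb_self_apply b.1 b.2).symm)

/-- the self-exponential order isomorphism -/
noncomputable def theIso : {f : Dinf → Dinf // ScottContinuous f} ≃o Dinf where
  toFun f := Psi f.1 f.2.monotone
  invFun x := ⟨Phi x, Phi_scott x⟩
  left_inv f := Subtype.ext (funext fun y => Phi_Psi f.1 f.2 y)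
  right_inv x := Psi_Phi x
  map_rel_iff' := by
    intro f g
    constructor
    · intro h
      show f.1 ≤ g.1
      intro y
      calc f.1 y = Phi (Psi f.1 f.2.monotone) y := (Phi_Psi f.1 f.2 y).symm
        _ ≤ Phi (Psi g.1 g.2.monotone) y := Phi_mono h le_rfl
        _ = g.1 y := Phi_Psi g.1 g.2 y
    · intro h
      exact Psi_mono fun y => h y

end Dinfty

/-- Scott's `D∞`: there exists a nontrivial pointed algebraic dcpo isomorphic to its own
Scott-continuous self-exponential. -/
theorem exists_nontrivial_pointed_algebraic_dcpo_iso_self_exponential :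
    ∃ (D : Type) (inst : PartialOrder D), @NontrivialPointedAlgebraicDcpoSelfExp D inst := by
  refine ⟨Dinfty.Dinf, inferInstance, Dinfty.isDcpo_Dinf, ⟨Dinfty.emb 0 false, Dinfty.bot_le_all⟩,
    ⟨Dinfty.emb 0 false, Dinfty.emb 0 true, Dinfty.Dinf_nontrivial⟩,
    ⟨Σ n, Dinfty.Stage n, fun b => Dinfty.emb b.1 b.2, Dinfty.isBasis_emb, Dinfty.emb_compact⟩,
    fun f g => Iff.rfl, ⟨Dinfty.theIso⟩⟩
end
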